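/- arXiv:2403.08690 — 4 statements merged into one kernel-verified Lean document; each statement's English description precedes it below -/
import Mathlib

section
/- Let $t_0 < T$, $n, m \in \mathbb{N}$, and let $A : [t_0,T] \to \mathbb{R}^{n\times n}$ and $B : [t_0,T] \to \mathbb{R}^{n\times m}$ be continuous. Define the reachable set $\mathcal{R} \subseteq \mathbb{R}^n$ as the set of all $y \in \mathbb{R}^n$ such that there exists a continuous control $u : [t_0,T] \to \mathbb{R}^m$ for which the solution of $\dot{x}(t) = A(t)x(t) + B(t)u(t)$, $x(t_0) = 0$, satisfies $x(T) = y$. Define the map $\Gamma : \mathbb{R}^n \to \mathbb{R}^n$ by $\Gamma(\lambda^T) = x(T)$, where $\lambda : [t_0,T] \to \mathbb{R}^n$ solves the adjoint equation $\dot{\lambda}(t) = -A(t)^{\mathsf{tr}}\lambda(t)$, $\lambda(T) = \lambda^T$, and $x : [t_0,T] \to \mathbb{R}^n$ solves $\dot{x}(t) = A(t)x(t) + B(t)B(t)^{\mathsf{tr}}\lambda(t)$, $x(t_0) = 0$. Then $\mathcal{R} = \Gamma(\mathbb{R}^n)$. -/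
open Matrix MeasureTheory

open Set

open Set

section Helpers

variable {p q : ℕ}

/-- Entry of a continuous matrix-valued function is continuous. -/
lemma contOn_entry {s : Set ℝ} {A : ℝ → Matrix (Fin p) (Fin q) ℝ}
    (hA : ContinuousOn A s) (i : Fin p) (j : Fin q) :
    ContinuousOn (fun t => A t i j) s := by
  have : Continuous (fun M : Matrix (Fin p) (Fin q) ℝ => M i j) :=
    (continuous_apply j).comp (continuous_apply i)
  exact this.comp_continuousOn hA

lemma contOn_transpose {s : Set ℝ} {A : ℝ → Matrix (Fin p) (Fin q) ℝ}
    (hA : ContinuousOn A s) : ContinuousOn (fun t => (A t)ᵀ) s := by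
  apply continuousOn_pi.2 fun j => continuousOn_pi.2 fun i => ?_
  exact contOn_entry hA i j

lemma contOn_mulVec {s : Set ℝ} {A : ℝ → Matrix (Fin p) (Fin q) ℝ} {w : ℝ → Fin q → ℝ}
    (hA : ContinuousOn A s) (hw : ContinuousOn w s) :
    ContinuousOn (fun t => A t *ᵥ w t) s := by
  apply continuousOn_pi.2 fun i => ?_
  simp only [Matrix.mulVec, dotProduct]
  exact continuousOn_finset_sum _ fun j _ =>
    (contOn_entry hA i j).mul ((continuous_apply j).comp_continuousOn hw)

lemma contOn_dotProduct {s : Set ℝ} {v w : ℝ → Fin q → ℝ}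
    (hv : ContinuousOn v s) (hw : ContinuousOn w s) :
    ContinuousOn (fun t => v t ⬝ᵥ w t) s := by
  simp only [dotProduct]
  exact continuousOn_finset_sum _ fun j _ =>
    ((continuous_apply j).comp_continuousOn hv).mul ((continuous_apply j).comp_continuousOn hw)

/-- Sup-norm bound for matrix-vector multiplication via the sum of absolute values of entries. -/
lemma norm_mulVec_le_sumAbs (M : Matrix (Fin p) (Fin q) ℝ) (v : Fin q → ℝ) :
    ‖M *ᵥ v‖ ≤ (∑ i, ∑ j, |M i j|) * ‖v‖ := by
  have hnn : 0 ≤ (∑ i, ∑ j, |M i j|) * ‖v‖ :=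
    mul_nonneg (Finset.sum_nonneg fun i _ => Finset.sum_nonneg fun j _ => abs_nonneg _)
      (norm_nonneg _)
  refine (pi_norm_le_iff_of_nonneg hnn).2 fun i => ?_
  have h1 : ‖(M *ᵥ v) i‖ ≤ ∑ j, |M i j| * ‖v‖ := by
    rw [Real.norm_eq_abs, Matrix.mulVec, dotProduct]
    refine (Finset.abs_sum_le_sum_abs _ _).trans (Finset.sum_le_sum fun j _ => ?_)
    rw [abs_mul]
    exact mul_le_mul_of_nonneg_left (by simpa [Real.norm_eq_abs] using norm_le_pi_norm v j)
      (abs_nonneg _)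
  refine h1.trans ?_
  rw [← Finset.sum_mul]
  refine mul_le_mul_of_nonneg_right ?_ (norm_nonneg _)
  exact Finset.single_le_sum (f := fun i => ∑ j, |M i j|)
    (fun i _ => Finset.sum_nonneg fun j _ => abs_nonneg _) (Finset.mem_univ i)

end Helpers

section Exist

open scoped NNReal

variable {E : Type*} [NormedAddCommGroup E] [NormedSpace ℝ E] [CompleteSpace E]

/-- Local existence for a globally-Lipschitz (in space) vector field, on a short interval. -/
lemma exists_sol_short (v : ℝ → E → E) {a b : ℝ} (hab : a ≤ b) (K : ℝ≥0)
    (hK : (K : ℝ) * (b - a) ≤ 1 / 2)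
    (hlip : ∀ t ∈ Icc a b, LipschitzWith K (v t))
    (hcont : ∀ x, ContinuousOn (fun t => v t x) (Icc a b)) (x₀ : E) :
    ∃ f : ℝ → E, f a = x₀ ∧ ∀ t ∈ Icc a b, HasDerivWithinAt f (v t (f t)) (Icc a b) t := by
  obtain ⟨C₀, hC₀⟩ := (isCompact_Icc (a := a) (b := b)).exists_bound_of_continuousOn (hcont x₀)
  set C : ℝ := max C₀ 0 with hC
  have hCnn : 0 ≤ C := le_max_right _ _
  have hCb : ∀ t ∈ Icc a b, ‖v t x₀‖ ≤ C := fun t ht => (hC₀ t ht).trans (le_max_left _ _)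
  set R : ℝ := 2 * C * (b - a) with hR
  have hRnn : 0 ≤ R := by
    have : (0:ℝ) ≤ b - a := by linarith
    positivity
  have hpl : IsPicardLindelof v (tmin := a) (tmax := b) ⟨a, ⟨le_rfl, hab⟩⟩ x₀ ⟨R, hRnn⟩ 0
      ⟨C + K * R, add_nonneg hCnn (mul_nonneg K.coe_nonneg hRnn)⟩ K := by
    refine ⟨fun t ht => (hlip t ht).lipschitzOnWith,
      fun x _ => hcont x, fun t ht x hx => ?_, ?_⟩
    · show ‖v t x‖ ≤ C + K * R
      have h1 : ‖v t x - v t x₀‖ ≤ K * ‖x - x₀‖ := by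
        simpa [dist_eq_norm] using (hlip t ht).dist_le_mul x x₀
      have h2 : ‖x - x₀‖ ≤ R := by
        simpa [dist_eq_norm] using (Metric.mem_closedBall.1 hx : dist x x₀ ≤ R)
      calc ‖v t x‖ ≤ ‖v t x - v t x₀‖ + ‖v t x₀‖ := by
            simpa using norm_add_le (v t x - v t x₀) (v t x₀)
        _ ≤ K * R + C := add_le_add (h1.trans (by nlinarith [K.coe_nonneg])) (hCb t ht)
        _ = C + K * R := by ring
    · have hmax : max (b - a) (a - a) = b - a := by
        rw [max_eq_left]; linarith
      show (C + K * R) * max (b - a) (a - a) ≤ R - 0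
      rw [hmax, sub_zero]
      have : (K : ℝ) * R ≤ C := by
        calc (K : ℝ) * R = 2 * C * ((K : ℝ) * (b - a)) := by ring
          _ ≤ 2 * C * (1 / 2) := by
              exact mul_le_mul_of_nonneg_left hK (by positivity)
          _ = C := by ring
      nlinarith [hK, hCnn, K.coe_nonneg, sub_nonneg.2 hab]
  exact hpl.exists_eq_forall_mem_Icc_hasDerivWithinAt₀

omit [CompleteSpace E] in
/-- Gluing two solutions at a common point. -/
lemma glue_sol (v : ℝ → E → E) {a c b : ℝ} (hac : a ≤ c) (hcb : c ≤ b)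
    {f₁ f₂ : ℝ → E}
    (h₁ : ∀ t ∈ Icc a c, HasDerivWithinAt f₁ (v t (f₁ t)) (Icc a c) t)
    (h₂ : ∀ t ∈ Icc c b, HasDerivWithinAt f₂ (v t (f₂ t)) (Icc c b) t)
    (hj : f₁ c = f₂ c) :
    ∃ f : ℝ → E, f a = f₁ a ∧ f b = f₂ b ∧
      ∀ t ∈ Icc a b, HasDerivWithinAt f (v t (f t)) (Icc a b) t := by
  classical
  set f : ℝ → E := fun t => if t ≤ c then f₁ t else f₂ t with hf
  have hfc : f c = f₁ c := by simp [hf]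
  have hfa : f a = f₁ a := by simp [hf, hac]
  have hfb : f b = f₂ b := by
    by_cases h : b ≤ c
    · have : b = c := le_antisymm h hcb
      simp [hf, h, this, hj]
    · simp [hf, h]
  have hf_eq₁ : ∀ t ∈ Iic c, f t = f₁ t := fun t ht => by
    simp only [hf]; rw [if_pos (mem_Iic.1 ht)]
  have hf_eq₂ : ∀ t ∈ Icc c b, f t = f₂ t := by
    intro t ht
    rcases eq_or_lt_of_le ht.1 with h | h
    · simp [hf, ← h, hj]
    · simp [hf, not_le.2 h]
  refine ⟨f, hfa, hfb, fun t ht => ?_⟩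
  rcases lt_trichotomy t c with htc | rfl | htc
  · -- t < c
    have ht' : t ∈ Icc a c := ⟨ht.1, htc.le⟩
    have hmem : Icc a c ∈ nhdsWithin t (Icc a b) := by
      refine mem_nhdsWithin.2 ⟨Iio c, isOpen_Iio, htc, fun s hs => ⟨hs.2.1, hs.1.le⟩⟩
    have hd : HasDerivWithinAt f₁ (v t (f₁ t)) (Icc a b) t :=
      (h₁ t ht').mono_of_mem_nhdsWithin hmem
    have heq : f =ᶠ[nhdsWithin t (Icc a b)] f₁ := by
      filter_upwards [hmem] with s hs using hf_eq₁ s (mem_Iic.2 hs.2)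
    have hft : f t = f₁ t := hf_eq₁ t htc.le
    rw [hft]
    exact hd.congr_of_eventuallyEq heq hft
  · -- t = c
    have hd₁ : HasDerivWithinAt f (v t (f t)) (Icc a t) t := by
      rw [hfc]
      exact (h₁ t ⟨ht.1, le_rfl⟩).congr (fun s hs => hf_eq₁ s hs.2) hfc
    have hd₂ : HasDerivWithinAt f (v t (f t)) (Icc t b) t := by
      have hft : f t = f₂ t := hfc.trans hj
      rw [hft]
      exact (h₂ t ⟨le_rfl, ht.2⟩).congr (fun s hs => hf_eq₂ s hs) hft
    have := hd₁.union hd₂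
    rwa [Set.Icc_union_Icc_eq_Icc ht.1 ht.2] at this
  · -- c < t
    have ht' : t ∈ Icc c b := ⟨htc.le, ht.2⟩
    have hmem : Icc c b ∈ nhdsWithin t (Icc a b) := by
      refine mem_nhdsWithin.2 ⟨Ioi c, isOpen_Ioi, htc, fun s hs => ⟨hs.1.le, hs.2.2⟩⟩
    have hd : HasDerivWithinAt f₂ (v t (f₂ t)) (Icc a b) t :=
      (h₂ t ht').mono_of_mem_nhdsWithin hmem
    have heq : f =ᶠ[nhdsWithin t (Icc a b)] f₂ := by
      filter_upwards [hmem] with s hs using hf_eq₂ s hs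
    have hft : f t = f₂ t := hf_eq₂ t ht'
    rw [hft]
    exact hd.congr_of_eventuallyEq heq hft

end Exist

section Global

open scoped NNReal

variable {E : Type*} [NormedAddCommGroup E] [NormedSpace ℝ E] [CompleteSpace E]

omit [CompleteSpace E] in
lemma hasDerivWithinAt_singleton' (f : ℝ → E) (a : ℝ) (d : E) :
    HasDerivWithinAt f d {a} a := by
  have h : HasFDerivWithinAt f (ContinuousLinearMap.smulRight (1 : ℝ →L[ℝ] ℝ) d) {a} a := by
    simp [HasFDerivWithinAt, nhdsWithin_singleton, hasFDerivAtFilter_iff_isLittleO,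
      Asymptotics.isLittleO_pure]
  simpa using h.hasDerivWithinAt

/-- Global existence on a compact interval for a vector field that is uniformly Lipschitz
in the space variable, with initial condition at the left endpoint. -/
lemma exists_sol_global (v : ℝ → E → E) {a b : ℝ} (hab : a ≤ b) (K : ℝ≥0)
    (hlip : ∀ t ∈ Icc a b, LipschitzWith K (v t))
    (hcont : ∀ x, ContinuousOn (fun t => v t x) (Icc a b)) (x₀ : E) :
    ∃ f : ℝ → E, f a = x₀ ∧ ∀ t ∈ Icc a b, HasDerivWithinAt f (v t (f t)) (Icc a b) t := by
  obtain ⟨N₀, hN₀⟩ := exists_nat_gt (2 * (K : ℝ) * (b - a))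
  set N : ℕ := max N₀ 1 with hN
  have hNpos : (0 : ℝ) < N := by
    have : 1 ≤ N := le_max_right _ _
    exact_mod_cast Nat.lt_of_lt_of_le Nat.zero_lt_one this
  set s : ℝ := (b - a) / N with hs
  have hs0 : 0 ≤ s := div_nonneg (by linarith) hNpos.le
  have hNle : 2 * (K : ℝ) * (b - a) ≤ N :=
    hN₀.le.trans (by exact_mod_cast Nat.le_max_left N₀ 1)
  have hKs : (K : ℝ) * s ≤ 1 / 2 := by
    rw [hs, ← mul_div_assoc, div_le_iff₀ hNpos]
    linarith
  have hNs : (N : ℝ) * s = b - a := by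
    rw [hs, mul_div_cancel₀ _ hNpos.ne']
  have key : ∀ j : ℕ, j ≤ N → ∃ f : ℝ → E, f a = x₀ ∧
      ∀ t ∈ Icc a (a + j * s), HasDerivWithinAt f (v t (f t)) (Icc a (a + j * s)) t := by
    intro j
    induction j with
    | zero =>
      intro _
      refine ⟨fun _ => x₀, rfl, fun t ht => ?_⟩
      simp only [Nat.cast_zero, zero_mul, add_zero, Icc_self, mem_singleton_iff] at ht ⊢
      subst ht
      exact hasDerivWithinAt_singleton' _ _ _
    | succ j ih =>
      intro hj1
      obtain ⟨f₁, hf₁a, hf₁⟩ := ih (Nat.le_of_succ_le hj1)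
      set c : ℝ := a + j * s with hc
      set c' : ℝ := a + (j + 1 : ℕ) * s with hc'
      have hac : a ≤ c := by
        have : 0 ≤ (j : ℝ) * s := mul_nonneg (Nat.cast_nonneg j) hs0
        linarith
      have hcc' : c ≤ c' := by
        have : ((j : ℝ)) * s ≤ ((j + 1 : ℕ) : ℝ) * s := by
          refine mul_le_mul_of_nonneg_right ?_ hs0
          exact_mod_cast Nat.le_succ j
        simp only [hc, hc']
        linarith
      have hc'b : c' ≤ b := by
        have h1 : ((j + 1 : ℕ) : ℝ) * s ≤ (N : ℝ) * s := by
          refine mul_le_mul_of_nonneg_right ?_ hs0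
          exact_mod_cast hj1
        simp only [hc']
        linarith [hNs]
      have hsub : Icc c c' ⊆ Icc a b := Icc_subset_Icc hac hc'b
      have hdiff : c' - c = s := by
        simp only [hc, hc']
        push_cast
        ring
      obtain ⟨f₂, hf₂c, hf₂⟩ := exists_sol_short v hcc' K (by rw [hdiff]; exact hKs)
        (fun t htc => hlip t (hsub htc)) (fun x => (hcont x).mono hsub) (f₁ c)
      obtain ⟨f, hfa, _, hf⟩ := glue_sol v hac hcc' hf₁ hf₂ hf₂c.symm
      exact ⟨f, by rw [hfa, hf₁a], hf⟩
  obtain ⟨f, hfa, hf⟩ := key N le_rfl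
  refine ⟨f, hfa, ?_⟩
  have : a + (N : ℝ) * s = b := by rw [hNs]; ring
  rwa [this] at hf

/-- Global existence with terminal condition at the right endpoint. -/
lemma exists_sol_global_right (v : ℝ → E → E) {a b : ℝ} (hab : a ≤ b) (K : ℝ≥0)
    (hlip : ∀ t ∈ Icc a b, LipschitzWith K (v t))
    (hcont : ∀ x, ContinuousOn (fun t => v t x) (Icc a b)) (x₀ : E) :
    ∃ f : ℝ → E, f b = x₀ ∧ ∀ t ∈ Icc a b, HasDerivWithinAt f (v t (f t)) (Icc a b) t := by
  set w : ℝ → E → E := fun r x => -v (a + b - r) x with hw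
  have hmem : ∀ r ∈ Icc a b, a + b - r ∈ Icc a b := fun r hr =>
    ⟨by linarith [hr.2], by linarith [hr.1]⟩
  have hwlip : ∀ r ∈ Icc a b, LipschitzWith K (w r) := by
    intro r hr
    have := hlip _ (hmem r hr)
    exact fun x y => by
      simpa [hw, edist_neg] using this x y
  have hwcont : ∀ x, ContinuousOn (fun r => w r x) (Icc a b) := by
    intro x
    have hσ : ContinuousOn (fun r : ℝ => a + b - r) (Icc a b) :=
      (continuous_const.sub continuous_id).continuousOn
    exact ((hcont x).comp hσ (fun r hr => hmem r hr)).neg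
  obtain ⟨g, hga, hg⟩ := exists_sol_global w hab K hwlip hwcont x₀
  refine ⟨fun t => g (a + b - t), by simpa using hga, fun t ht => ?_⟩
  have hσd : HasDerivWithinAt (fun r : ℝ => a + b - r) (-1) (Icc a b) t :=
    ((hasDerivWithinAt_id t _).const_sub (a + b))
  have hgd := hg (a + b - t) (hmem t ht)
  have := HasDerivWithinAt.scomp t hgd hσd (fun r hr => hmem r hr)
  have h2 : a + b - (a + b - t) = t := by ring
  simp only [hw, h2] at this
  simpa [Function.comp_def] using this
end Global

section Linear

variable {d : ℕ}

lemma linear_lipschitz {a b : ℝ} (M : ℝ → Matrix (Fin d) (Fin d) ℝ) (g : ℝ → Fin d → ℝ)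
    (hM : ContinuousOn M (Icc a b)) :
    ∃ K : NNReal, ∀ t ∈ Icc a b,
      LipschitzWith K (fun x : Fin d → ℝ => M t *ᵥ x + g t) := by
  have hSA : ContinuousOn (fun t => ∑ i, ∑ j, |M t i j|) (Icc a b) :=
    continuousOn_finset_sum _ fun i _ => continuousOn_finset_sum _ fun j _ =>
      (contOn_entry hM i j).abs
  obtain ⟨C₀, hC₀⟩ := (isCompact_Icc (a := a) (b := b)).exists_bound_of_continuousOn hSA
  refine ⟨C₀.toNNReal, fun t ht => LipschitzWith.of_dist_le_mul fun x y => ?_⟩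
  have h1 : dist (M t *ᵥ x + g t) (M t *ᵥ y + g t) = ‖M t *ᵥ (x - y)‖ := by
    rw [dist_eq_norm]
    congr 1
    rw [Matrix.mulVec_sub]
    abel
  rw [h1, dist_eq_norm]
  refine (norm_mulVec_le_sumAbs (M t) (x - y)).trans ?_
  refine mul_le_mul_of_nonneg_right ?_ (norm_nonneg _)
  have h2 : ∑ i, ∑ j, |M t i j| ≤ C₀ := by
    have := hC₀ t ht
    rw [Real.norm_eq_abs] at this
    exact (le_abs_self _).trans this
  rw [Real.coe_toNNReal']
  exact h2.trans (le_max_left C₀ 0)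

/-- Global existence for a linear time-varying ODE with continuous coefficients,
initial condition at the left endpoint. -/
lemma exists_linear_sol {a b : ℝ} (hab : a ≤ b) (M : ℝ → Matrix (Fin d) (Fin d) ℝ)
    (g : ℝ → Fin d → ℝ) (hM : ContinuousOn M (Icc a b)) (hg : ContinuousOn g (Icc a b))
    (x₀ : Fin d → ℝ) :
    ∃ x : ℝ → Fin d → ℝ, x a = x₀ ∧
      ∀ t ∈ Icc a b, HasDerivWithinAt x (M t *ᵥ x t + g t) (Icc a b) t := by
  obtain ⟨K, hK⟩ := linear_lipschitz M g hM
  exact exists_sol_global (fun t x => M t *ᵥ x + g t) hab K hK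
    (fun x => (contOn_mulVec hM continuousOn_const).add hg) x₀

/-- Global existence for a linear time-varying ODE with continuous coefficients,
terminal condition at the right endpoint. -/
lemma exists_linear_sol_right {a b : ℝ} (hab : a ≤ b) (M : ℝ → Matrix (Fin d) (Fin d) ℝ)
    (g : ℝ → Fin d → ℝ) (hM : ContinuousOn M (Icc a b)) (hg : ContinuousOn g (Icc a b))
    (x₀ : Fin d → ℝ) :
    ∃ x : ℝ → Fin d → ℝ, x b = x₀ ∧
      ∀ t ∈ Icc a b, HasDerivWithinAt x (M t *ᵥ x t + g t) (Icc a b) t := by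
  obtain ⟨K, hK⟩ := linear_lipschitz M g hM
  exact exists_sol_global_right (fun t x => M t *ᵥ x + g t) hab K hK
    (fun x => (contOn_mulVec hM continuousOn_const).add hg) x₀

end Linear

section Energy

variable {d : ℕ}

/-- Energy/duality identity: if `l` solves the adjoint equation and `x` solves the forced
equation, then `⟨x, l⟩` evolves according to the forcing paired with `l`. -/
lemma energy_identity {a b : ℝ} (hab : a ≤ b) (A : ℝ → Matrix (Fin d) (Fin d) ℝ)
    (f l x : ℝ → Fin d → ℝ) (hf : ContinuousOn f (Icc a b))
    (hl : ∀ t ∈ Icc a b, HasDerivWithinAt l (-((A t)ᵀ *ᵥ l t)) (Icc a b) t)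
    (hx : ∀ t ∈ Icc a b, HasDerivWithinAt x (A t *ᵥ x t + f t) (Icc a b) t) :
    ∫ t in a..b, f t ⬝ᵥ l t = x b ⬝ᵥ l b - x a ⬝ᵥ l a := by
  have hlc : ContinuousOn l (Icc a b) := fun t ht => (hl t ht).continuousWithinAt
  have hg' : ∀ t ∈ Icc a b,
      HasDerivWithinAt (fun τ => x τ ⬝ᵥ l τ) (f t ⬝ᵥ l t) (Icc a b) t := by
    intro t ht
    have hxi := hasDerivWithinAt_pi.1 (hx t ht)
    have hli := hasDerivWithinAt_pi.1 (hl t ht)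
    have hsum : HasDerivWithinAt (fun τ => ∑ i, x τ i * l τ i)
        (∑ i, ((A t *ᵥ x t + f t) i * l t i + x t i * (-((A t)ᵀ *ᵥ l t)) i))
        (Icc a b) t :=
      HasDerivWithinAt.fun_sum fun i _ => (hxi i).mul (hli i)
    have h1 : (A t *ᵥ x t) ⬝ᵥ l t = x t ⬝ᵥ ((A t)ᵀ *ᵥ l t) := by
      rw [Matrix.mulVec_transpose, dotProduct_comm (A t *ᵥ x t),
        Matrix.dotProduct_mulVec, dotProduct_comm]
    have hkey : (∑ i, ((A t *ᵥ x t + f t) i * l t i + x t i * (-((A t)ᵀ *ᵥ l t)) i))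
        = f t ⬝ᵥ l t := by
      have expand : (∑ i, ((A t *ᵥ x t + f t) i * l t i + x t i * (-((A t)ᵀ *ᵥ l t)) i))
          = (A t *ᵥ x t) ⬝ᵥ l t + f t ⬝ᵥ l t - x t ⬝ᵥ ((A t)ᵀ *ᵥ l t) := by
        simp only [dotProduct, Pi.add_apply, Pi.neg_apply, add_mul, mul_neg,
          Finset.sum_add_distrib, Finset.sum_neg_distrib]
        ring
      rw [expand, h1]
      ring
    rw [← hkey]
    exact hsum
  have hgc : ContinuousOn (fun τ => x τ ⬝ᵥ l τ) (Icc a b) :=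
    fun t ht => (hg' t ht).continuousWithinAt
  have hint : IntervalIntegrable (fun t => f t ⬝ᵥ l t) volume a b := by
    apply ContinuousOn.intervalIntegrable
    rw [uIcc_of_le hab]
    exact contOn_dotProduct hf hlc
  exact intervalIntegral.integral_eq_sub_of_hasDerivAt_of_le hab hgc
    (fun t htI => (hg' t (Ioo_subset_Icc_self htI)).hasDerivAt
      (Icc_mem_nhds htI.1 htI.2)) hint

/-- A continuous nonnegative function with vanishing integral vanishes. -/
lemma eq_zero_of_integral_eq_zero {a b : ℝ} (hab : a < b) {q : ℝ → ℝ}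
    (hq : ContinuousOn q (Icc a b)) (hnn : ∀ t ∈ Icc a b, 0 ≤ q t)
    (hz : ∫ t in a..b, q t = 0) : ∀ t ∈ Icc a b, q t = 0 := by
  have hint : IntervalIntegrable q volume a b := by
    apply ContinuousOn.intervalIntegrable
    rwa [uIcc_of_le hab.le]
  have hnn' : 0 ≤ᵐ[volume.restrict (Ioc a b)] q :=
    (ae_restrict_iff' measurableSet_Ioc).2
      (Filter.Eventually.of_forall fun t ht => hnn t (Ioc_subset_Icc_self ht))
  have hae : q =ᵐ[volume.restrict (Ioc a b)] 0 :=
    (intervalIntegral.integral_eq_zero_iff_of_le_of_nonneg_ae hab.le hnn' hint).1 hz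
  rw [Measure.restrict_congr_set Ioc_ae_eq_Icc] at hae
  exact Measure.eqOn_Icc_of_ae_eq volume hab.ne hae hq continuousOn_const

end Energy

section Dual

open scoped RealInnerProductSpace

/-- A vector orthogonal-duality criterion for membership in a submodule of `Fin d → ℝ`. -/
lemma mem_of_forall_dot {d : ℕ} (W : Submodule ℝ (Fin d → ℝ)) (y : Fin d → ℝ)
    (h : ∀ ζ : Fin d → ℝ, (∀ w ∈ W, w ⬝ᵥ ζ = 0) → y ⬝ᵥ ζ = 0) : y ∈ W := by
  set e : EuclideanSpace ℝ (Fin d) ≃ₗ[ℝ] (Fin d → ℝ) :=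
    WithLp.linearEquiv 2 ℝ (Fin d → ℝ) with he
  set W' : Submodule ℝ (EuclideanSpace ℝ (Fin d)) := W.comap e.toLinearMap with hW'
  have hy : e.symm y ∈ W'ᗮᗮ := by
    rw [Submodule.mem_orthogonal]
    intro z hz
    have h0 : ∀ w ∈ W, w ⬝ᵥ (e z) = 0 := by
      intro w hw
      have hw' : e.symm w ∈ W' := by
        simp only [hW', Submodule.mem_comap, LinearEquiv.coe_coe, LinearEquiv.apply_symm_apply]
        exact hw
      have hinner := (Submodule.mem_orthogonal W' z).1 hz _ hw'
      rw [dotProduct]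
      rw [PiLp.inner_apply] at hinner
      simpa [he, RCLike.inner_apply, WithLp.linearEquiv_apply, mul_comm] using hinner
    have hyz := h (e z) h0
    rw [dotProduct] at hyz
    rw [PiLp.inner_apply]
    simp only [RCLike.inner_apply, starRingEnd_apply, star_trivial]
    rw [← hyz]
    apply Finset.sum_congr rfl
    intro i _
    simp [he, mul_comm]
  rw [Submodule.orthogonal_orthogonal] at hy
  simpa only [hW', Submodule.mem_comap, LinearEquiv.coe_coe,
    LinearEquiv.apply_symm_apply] using hy

end Dual

lemma mulVec_dot {p q : ℕ} (M : Matrix (Fin p) (Fin q) ℝ) (v : Fin q → ℝ) (w : Fin p → ℝ) :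
    (M *ᵥ v) ⬝ᵥ w = v ⬝ᵥ (Mᵀ *ᵥ w) := by
  rw [Matrix.mulVec_transpose, dotProduct_comm (M *ᵥ v),
    Matrix.dotProduct_mulVec, dotProduct_comm]


/-- **HUM controllability theorem** (Theorem 1). The reachable set `𝓡` of the linear
time-varying system `ẋ = A(t) x + B(t) u`, `x(t₀) = 0`, coincides with the image of the
HUM map `Γ : λᵀ ↦ x(T)`, where `λ` solves the adjoint equation `λ̇ = -A(t)ᵀ λ`,
`λ(T) = λᵀ`, and `x` solves `ẋ = A(t) x + B(t) B(t)ᵀ λ(t)`, `x(t₀) = 0`. -/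
theorem hum_reachable_eq_image {n m : ℕ} (t₀ T : ℝ) (ht : t₀ < T)
    (A : ℝ → Matrix (Fin n) (Fin n) ℝ) (B : ℝ → Matrix (Fin n) (Fin m) ℝ)
    (hA : ContinuousOn A (Set.Icc t₀ T)) (hB : ContinuousOn B (Set.Icc t₀ T)) :
    {y : Fin n → ℝ | ∃ u : ℝ → Fin m → ℝ, ContinuousOn u (Set.Icc t₀ T) ∧
      ∃ x : ℝ → Fin n → ℝ,
        (∀ t ∈ Set.Icc t₀ T,
          HasDerivWithinAt x (A t *ᵥ x t + B t *ᵥ u t) (Set.Icc t₀ T) t) ∧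
        x t₀ = 0 ∧ x T = y} =
    {y : Fin n → ℝ | ∃ lT : Fin n → ℝ, ∃ l x : ℝ → Fin n → ℝ,
        (∀ t ∈ Set.Icc t₀ T,
          HasDerivWithinAt l (-((A t)ᵀ *ᵥ l t)) (Set.Icc t₀ T) t) ∧
        l T = lT ∧
        (∀ t ∈ Set.Icc t₀ T,
          HasDerivWithinAt x (A t *ᵥ x t + B t *ᵥ ((B t)ᵀ *ᵥ l t)) (Set.Icc t₀ T) t) ∧
        x t₀ = 0 ∧ x T = y} := by
  have hab : t₀ ≤ T := ht.le
  ext y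
  simp only [Set.mem_setOf_eq]
  constructor
  · -- reachable ⊆ image of Γ
    rintro ⟨u, hu, x, hx, hx0, hxT⟩
    set W : Submodule ℝ (Fin n → ℝ) :=
      { carrier := {y : Fin n → ℝ | ∃ lT : Fin n → ℝ, ∃ l x : ℝ → Fin n → ℝ,
          (∀ t ∈ Set.Icc t₀ T,
            HasDerivWithinAt l (-((A t)ᵀ *ᵥ l t)) (Set.Icc t₀ T) t) ∧
          l T = lT ∧
          (∀ t ∈ Set.Icc t₀ T,
            HasDerivWithinAt x (A t *ᵥ x t + B t *ᵥ ((B t)ᵀ *ᵥ l t)) (Set.Icc t₀ T) t) ∧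
          x t₀ = 0 ∧ x T = y}
        add_mem' := by
          rintro a b ⟨lT, l, z, hl, hlT, hz, hz0, hzT⟩ ⟨lT', l', z', hl', hlT', hz', hz0', hzT'⟩
          refine ⟨lT + lT', fun t => l t + l' t, fun t => z t + z' t, fun t htt => ?_,
            by simp [hlT, hlT'], fun t htt => ?_, by simp [hz0, hz0'],
            by simp [hzT, hzT']⟩
          · have := (hl t htt).add (hl' t htt)
            have heq : -((A t)ᵀ *ᵥ l t) + -((A t)ᵀ *ᵥ l' t) = -((A t)ᵀ *ᵥ (l t + l' t)) := by
              rw [Matrix.mulVec_add]; abel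
            rwa [heq] at this
          · have := (hz t htt).add (hz' t htt)
            have heq : A t *ᵥ z t + B t *ᵥ ((B t)ᵀ *ᵥ l t) +
                (A t *ᵥ z' t + B t *ᵥ ((B t)ᵀ *ᵥ l' t)) =
                A t *ᵥ (z t + z' t) + B t *ᵥ ((B t)ᵀ *ᵥ (l t + l' t)) := by
              rw [Matrix.mulVec_add, Matrix.mulVec_add, Matrix.mulVec_add]; abel
            rwa [heq] at this
        zero_mem' := by
          refine ⟨0, fun _ => 0, fun _ => 0, fun t htt => ?_, rfl, fun t htt => ?_, rfl, rfl⟩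
          · simpa using hasDerivWithinAt_const t (Set.Icc t₀ T) (0 : Fin n → ℝ)
          · simpa using hasDerivWithinAt_const t (Set.Icc t₀ T) (0 : Fin n → ℝ)
        smul_mem' := by
          rintro c a ⟨lT, l, z, hl, hlT, hz, hz0, hzT⟩
          refine ⟨c • lT, fun t => c • l t, fun t => c • z t, fun t htt => ?_,
            by simp [hlT], fun t htt => ?_, by simp [hz0], by simp [hzT]⟩
          · have := (hl t htt).const_smul c
            have heq : c • -((A t)ᵀ *ᵥ l t) = -((A t)ᵀ *ᵥ (c • l t)) := by
              rw [Matrix.mulVec_smul, smul_neg]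
            rwa [heq] at this
          · have := (hz t htt).const_smul c
            have heq : c • (A t *ᵥ z t + B t *ᵥ ((B t)ᵀ *ᵥ l t)) =
                A t *ᵥ (c • z t) + B t *ᵥ ((B t)ᵀ *ᵥ (c • l t)) := by
              rw [Matrix.mulVec_smul, Matrix.mulVec_smul, Matrix.mulVec_smul, smul_add]
            rwa [heq] at this } with hW
    show y ∈ W
    apply mem_of_forall_dot
    intro ζ hζ
    -- solve the adjoint equation backward from `ζ`
    have hAc : ContinuousOn (fun t => -((A t)ᵀ)) (Set.Icc t₀ T) := (contOn_transpose hA).neg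
    obtain ⟨l, hlT, hl'⟩ := exists_linear_sol_right hab (fun t => -((A t)ᵀ))
      (fun _ => 0) hAc continuousOn_const ζ
    have hl : ∀ t ∈ Set.Icc t₀ T,
        HasDerivWithinAt l (-((A t)ᵀ *ᵥ l t)) (Set.Icc t₀ T) t := by
      intro t htt
      have := hl' t htt
      simpa [Matrix.neg_mulVec] using this
    have hlc : ContinuousOn l (Set.Icc t₀ T) := fun t htt => (hl t htt).continuousWithinAt
    set q : ℝ → Fin m → ℝ := fun t => (B t)ᵀ *ᵥ l t with hq
    have hqc : ContinuousOn q (Set.Icc t₀ T) := contOn_mulVec (contOn_transpose hB) hlc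
    have hgc : ContinuousOn (fun t => B t *ᵥ q t) (Set.Icc t₀ T) := contOn_mulVec hB hqc
    -- solve the HUM state equation forward from 0
    obtain ⟨z, hz0, hz⟩ := exists_linear_sol hab A (fun t => B t *ᵥ q t) hA hgc 0
    have hzW : z T ∈ W := ⟨ζ, l, z, hl, hlT, fun t htt => hz t htt, hz0, rfl⟩
    have hzero : z T ⬝ᵥ ζ = 0 := hζ (z T) hzW
    -- energy identity for the HUM trajectory
    have hE1 := energy_identity hab A (fun t => B t *ᵥ q t) l z hgc hl hz
    have hE1' : ∫ t in t₀..T, q t ⬝ᵥ q t = 0 := by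
      have hcongr : Set.EqOn (fun t => (B t *ᵥ q t) ⬝ᵥ l t) (fun t => q t ⬝ᵥ q t)
          (Set.uIcc t₀ T) := by
        rw [Set.uIcc_of_le hab]
        intro t htt
        simp only
        rw [mulVec_dot]
      rw [← intervalIntegral.integral_congr hcongr, hE1, hz0, hlT, hzero,
        zero_dotProduct, sub_zero]
    -- the feedback control vanishes
    have hqzero : ∀ t ∈ Set.Icc t₀ T, q t = 0 := by
      intro t htt
      have hsq := eq_zero_of_integral_eq_zero ht (contOn_dotProduct hqc hqc)
        (fun s _ => Finset.sum_nonneg fun i _ => mul_self_nonneg _) hE1' t htt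
      funext i
      have hnn : ∀ i ∈ Finset.univ, 0 ≤ q t i * q t i := fun i _ => mul_self_nonneg _
      have := (Finset.sum_eq_zero_iff_of_nonneg hnn).1 hsq i (Finset.mem_univ i)
      exact mul_self_eq_zero.1 this
    -- energy identity for the given trajectory
    have hE2 := energy_identity hab A (fun t => B t *ᵥ u t) l x (contOn_mulVec hB hu) hl hx
    have hE2' : ∫ t in t₀..T, (B t *ᵥ u t) ⬝ᵥ l t = 0 := by
      have hcongr : Set.EqOn (fun t => (B t *ᵥ u t) ⬝ᵥ l t) (fun _ => (0 : ℝ))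
          (Set.uIcc t₀ T) := by
        rw [Set.uIcc_of_le hab]
        intro t htt
        simp only
        rw [mulVec_dot]
        have hq0 := hqzero t htt
        simp only [hq] at hq0
        rw [hq0, dotProduct_zero]
      rw [intervalIntegral.integral_congr hcongr]
      simp
    rw [hE2', hxT, hx0, hlT, zero_dotProduct, sub_zero] at hE2
    exact hE2.symm
  · -- image of Γ ⊆ reachable
    rintro ⟨lT, l, x, hl, hlT, hx, hx0, hxT⟩
    have hlc : ContinuousOn l (Set.Icc t₀ T) := fun t htt => (hl t htt).continuousWithinAt
    exact ⟨fun t => (B t)ᵀ *ᵥ l t, contOn_mulVec (contOn_transpose hB) hlc, x, hx, hx0, hxT⟩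
end

section
/- Let $t_0 < T$, $d \in \mathbb{N}$, and let $w : [t_0,T] \to \mathbb{R}^{d\times d}$ be continuous. Let $b : [t_0,T] \times \mathbb{R}^d \to \mathbb{R}^d$ with $b(t,\cdot) \in L^2(\mathbb{R}^d;\mathbb{R}^d)$ for a.e. $t$ and $t \mapsto b(t,\cdot)$ continuous into $L^2$. Let $\Phi : [t_0,T] \times \mathbb{R}^d \to \mathbb{R}^d$ satisfy, for each $x \in \mathbb{R}^d$, $\partial_t \Phi(t,x) = w(t)\Phi(t,x) + b(t,x)$ with $\Phi(t_0,x) = 0$, and let $\Lambda : [t_0,T] \times \mathbb{R}^d \to \mathbb{R}^d$ satisfy $\partial_t \Lambda(t,x) = -w(t)^{\mathsf{tr}}\Lambda(t,x)$ with terminal condition $\Lambda(T,x) = \Lambda^T(x)$. Assume $\Phi(t,\cdot), \Lambda(t,\cdot) \in L^2(\mathbb{R}^d;\mathbb{R}^d)$ for all $t \in [t_0,T]$. Then $\langle \Phi(T,\cdot), \Lambda^T(\cdot) \rangle_{L^2} = \int_{t_0}^{T} \langle b(t,\cdot), \Lambda(t,\cdot) \rangle_{L^2} \, dt$. -/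
open Matrix MeasureTheory Set Filter
open scoped ENNReal Topology

section Helpers

/-- A function on `[a,b] × X` which is continuous in the time variable and a.e. strongly
measurable in the space variable is jointly a.e. strongly measurable. -/
lemma jointly_aesm {X : Type*} [MeasurableSpace X] {ν : Measure X} [SFinite ν]
    {a b : ℝ} (hab : a < b) (f : ℝ → X → ℝ)
    (hc : ∀ x, ContinuousOn (fun t => f t x) (Set.Icc a b))
    (hm : ∀ t ∈ Set.Icc a b, AEStronglyMeasurable (f t) ν) :
    AEStronglyMeasurable (fun p : ℝ × X => f p.1 p.2)
      ((volume.restrict (Set.Icc a b)).prod ν) := by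
  set μ := volume.restrict (Set.Icc a b) with hμ
  have hB : (0:ℝ) < b - a := by linarith
  set pt : ℕ → ℕ → ℝ := fun n k => a + (b - a) * k / 2 ^ n with hpt
  have hP : ∀ n : ℕ, (0:ℝ) < 2 ^ n := fun n => by positivity
  have hpt_mem : ∀ n k, k ≤ 2 ^ n → pt n k ∈ Set.Icc a b := by
    intro n k hk
    constructor
    · have : (0:ℝ) ≤ (b - a) * k / 2 ^ n := by positivity
      simp only [hpt]; linarith
    · simp only [hpt]
      have hk' : (k : ℝ) ≤ 2 ^ n := by exact_mod_cast hk
      have : (b - a) * k / 2 ^ n ≤ (b - a) := by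
        rw [div_le_iff₀ (hP n)]
        nlinarith
      linarith
  set F : ℕ → ℝ × X → ℝ := fun n p =>
    ∑ k ∈ Finset.range (2 ^ n), Set.indicator
      ((Set.Ico (pt n k) (pt n (k+1))) ×ˢ (Set.univ : Set X))
      (fun q => f (pt n k) q.2) p with hF
  have hFm : ∀ n, AEStronglyMeasurable (F n) (μ.prod ν) := by
    intro n
    apply Finset.aestronglyMeasurable_fun_sum
    intro k hk
    refine AEStronglyMeasurable.indicator ?_ (measurableSet_Ico.prod MeasurableSet.univ)
    exact (hm (pt n k) (hpt_mem n k (Finset.mem_range.1 hk).le)).comp_quasiMeasurePreserving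
      Measure.quasiMeasurePreserving_snd
  have hae : ∀ᵐ p ∂(μ.prod ν), p.1 ∈ Set.Ico a b := by
    rw [ae_iff]
    refine measure_mono_null (fun p hp => ?_) (?_ : (μ.prod ν) (((Set.Ico a b)ᶜ) ×ˢ Set.univ) = 0)
    · exact ⟨hp, trivial⟩
    · rw [Measure.prod_prod]
      have h0 : μ ((Set.Ico a b)ᶜ) = 0 := by
        rw [hμ, Measure.restrict_apply' measurableSet_Icc]
        refine measure_mono_null (fun t ht => ?_) (measure_singleton b)
        rcases ht with ⟨ht1, ht2⟩
        simp only [Set.mem_compl_iff, Set.mem_Ico, not_and, not_lt] at ht1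
        have := ht1 ht2.1
        simp [le_antisymm ht2.2 this]
      rw [h0, zero_mul]
  refine aestronglyMeasurable_of_tendsto_ae atTop hFm ?_
  filter_upwards [hae] with p hp
  obtain ⟨t, x⟩ := p
  simp only at hp ⊢
  set y : ℕ → ℝ := fun n => (t - a) / (b - a) * 2 ^ n with hy
  have hy0 : ∀ n, 0 ≤ y n := by
    intro n
    have : 0 ≤ t - a := by linarith [hp.1]
    positivity
  set k : ℕ → ℕ := fun n => ⌊y n⌋₊ with hk
  have hiff : ∀ n (j : ℕ), pt n j ≤ t ↔ (j:ℝ) ≤ y n := by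
    intro n j
    have hyv : y n = (t - a) / (b - a) * 2 ^ n := rfl
    have hptv : pt n j = a + (b - a) * j / 2 ^ n := rfl
    rw [hyv, hptv, div_mul_eq_mul_div, le_div_iff₀ hB]
    constructor
    · intro h
      have h1 : (b - a) * j / 2 ^ n ≤ t - a := by linarith
      rw [div_le_iff₀ (hP n)] at h1
      nlinarith
    · intro h
      have : (b - a) * j / 2 ^ n ≤ t - a := by
        rw [div_le_iff₀ (hP n)]; nlinarith
      linarith
  have hmem : ∀ n (j : ℕ), (t ∈ Set.Ico (pt n j) (pt n (j+1))) ↔ j = k n := by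
    intro n j
    rw [Set.mem_Ico, hiff n j, ← not_le, hiff n (j+1), not_le]
    push_cast
    rw [eq_comm, hk, Nat.floor_eq_iff (hy0 n)]
  have hklt : ∀ n, k n < 2 ^ n := by
    intro n
    have hkv : k n = ⌊y n⌋₊ := rfl
    have hyv : y n = (t - a) / (b - a) * 2 ^ n := rfl
    rw [hkv, Nat.floor_lt (hy0 n)]
    push_cast
    rw [hyv, div_mul_eq_mul_div, div_lt_iff₀ hB]
    nlinarith [hp.2, hP n]
  have hFval : ∀ n, F n (t, x) = f (pt n (k n)) x := by
    intro n
    show (∑ j ∈ Finset.range (2 ^ n), (Set.Ico (pt n j) (pt n (j+1)) ×ˢ (Set.univ : Set X)).indicator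
      (fun q => f (pt n j) q.2) (t, x)) = f (pt n (k n)) x
    rw [Finset.sum_eq_single (k n)]
    · exact Set.indicator_of_mem (by
        refine Set.mem_prod.2 ⟨?_, trivial⟩
        exact (hmem n (k n)).2 rfl) _
    · intro j hj hjk
      refine Set.indicator_of_notMem (fun hmem' => hjk ?_) _
      exact (hmem n j).1 (Set.mem_prod.1 hmem').1
    · intro hk'
      exact absurd (Finset.mem_range.2 (hklt n)) hk'
  have hmemk : ∀ n, pt n (k n) ∈ Set.Icc a b := fun n => hpt_mem n (k n) (hklt n).le
  have hle : ∀ n, pt n (k n) ≤ t := fun n => (hiff n (k n)).2 (Nat.floor_le (hy0 n))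
  have hlt : ∀ n, t < pt n (k n) + (b - a) / 2 ^ n := by
    intro n
    have h2 : ¬ ((↑(k n + 1) : ℝ) ≤ y n) := by
      push_cast
      rw [not_le]
      exact Nat.lt_floor_add_one (y n)
    have h3 : ¬ (pt n (k n + 1) ≤ t) := fun h => h2 ((hiff n (k n + 1)).1 h)
    rw [not_le] at h3
    have heq : pt n (k n + 1) = pt n (k n) + (b - a) / 2 ^ n := by
      show a + (b - a) * (↑(k n + 1)) / 2 ^ n = a + (b - a) * ↑(k n) / 2 ^ n + (b - a) / 2 ^ n
      push_cast
      ring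
    rwa [heq] at h3
  have htend : Filter.Tendsto (fun n => pt n (k n)) atTop (𝓝 t) := by
    rw [← tendsto_sub_nhds_zero_iff]
    have hb : Filter.Tendsto (fun n : ℕ => (b - a) / 2 ^ n) atTop (𝓝 0) := by
      have h4 : Filter.Tendsto (fun n : ℕ => (b - a) * (1/2 : ℝ) ^ n) atTop (𝓝 ((b-a) * 0)) :=
        (tendsto_pow_atTop_nhds_zero_of_lt_one (by norm_num) (by norm_num)).const_mul _
      simp only [mul_zero] at h4
      refine h4.congr (fun n => ?_)
      rw [div_pow, one_pow, mul_one_div]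
    refine squeeze_zero_norm (fun n => ?_) hb
    rw [Real.norm_eq_abs, abs_le]
    constructor
    · have h0 := hlt n
      linarith
    · have h0 : pt n (k n) - t ≤ 0 := sub_nonpos.2 (hle n)
      exact h0.trans (by positivity)
  have hcont : ContinuousWithinAt (fun s => f s x) (Set.Icc a b) t := (hc x) t ⟨hp.1, hp.2.le⟩
  have h2 : Filter.Tendsto (fun n => f (pt n (k n)) x) atTop (𝓝 (f t x)) :=
    (hcont.tendsto).comp (tendsto_nhdsWithin_iff.2 ⟨htend, Filter.Eventually.of_forall hmemk⟩)
  exact h2.congr (fun n => (hFval n).symm)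

/-- For an `L²` function, the quadratic lintegral equals `ofReal` of the Bochner integral of
the squared norm. -/
lemma lintegral_sq_eq_ofReal {X : Type*} [MeasurableSpace X] {ν : Measure X}
    {E : Type*} [NormedAddCommGroup E] {g : X → E} (hg : MemLp g 2 ν) :
    ∫⁻ x, (‖g x‖₊ : ℝ≥0∞) ^ (2:ℝ) ∂ν = ENNReal.ofReal (∫ x, ‖g x‖ ^ 2 ∂ν) := by
  rw [ofReal_integral_eq_lintegral_ofReal ((memLp_two_iff_integrable_sq_norm hg.1).1 hg)
    (Filter.Eventually.of_forall fun x => by positivity)]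
  refine lintegral_congr fun x => ?_
  rw [← enorm_eq_nnnorm, ← ofReal_norm]
  rw [show ((2:ℝ)) = ((2:ℕ):ℝ) by norm_num, ENNReal.rpow_natCast,
    ← ENNReal.ofReal_pow (norm_nonneg _)]

lemma lintegral_sq_lt_top {X : Type*} [MeasurableSpace X] {ν : Measure X}
    {E : Type*} [NormedAddCommGroup E] {g : X → E} (hg : MemLp g 2 ν) :
    ∫⁻ x, (‖g x‖₊ : ℝ≥0∞) ^ (2:ℝ) ∂ν < ∞ := by
  rw [lintegral_sq_eq_ofReal hg]
  exact ENNReal.ofReal_lt_top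

lemma norm_dotProduct_le {d : ℕ} (u v : Fin d → ℝ) : ‖u ⬝ᵥ v‖ ≤ d * (‖u‖ * ‖v‖) := by
  rw [Real.norm_eq_abs]
  calc |u ⬝ᵥ v| ≤ ∑ i, |u i * v i| := Finset.abs_sum_le_sum_abs _ _
    _ ≤ ∑ _i : Fin d, ‖u‖ * ‖v‖ := by
        refine Finset.sum_le_sum fun i _ => ?_
        rw [abs_mul]
        have h1 : |u i| ≤ ‖u‖ := by
          have := norm_le_pi_norm u i; rwa [Real.norm_eq_abs] at this
        have h2 : |v i| ≤ ‖v‖ := by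
          have := norm_le_pi_norm v i; rwa [Real.norm_eq_abs] at this
        exact mul_le_mul h1 h2 (abs_nonneg _) (norm_nonneg _)
    _ = d * (‖u‖ * ‖v‖) := by rw [Finset.sum_const, Finset.card_univ, Fintype.card_fin,
        nsmul_eq_mul]

lemma nnnorm_dotProduct_le {d : ℕ} (u v : Fin d → ℝ) :
    (‖u ⬝ᵥ v‖₊ : ℝ≥0∞) ≤ (d : ℝ≥0∞) * ((‖u‖₊ : ℝ≥0∞) * (‖v‖₊ : ℝ≥0∞)) := by
  rw [← enorm_eq_nnnorm, ← enorm_eq_nnnorm, ← enorm_eq_nnnorm, ← ofReal_norm, ← ofReal_norm,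
    ← ofReal_norm]
  calc ENNReal.ofReal ‖u ⬝ᵥ v‖ ≤ ENNReal.ofReal (d * (‖u‖ * ‖v‖)) :=
        ENNReal.ofReal_le_ofReal (norm_dotProduct_le u v)
    _ = (d : ℝ≥0∞) * (ENNReal.ofReal ‖u‖ * ENNReal.ofReal ‖v‖) := by
        rw [ENNReal.ofReal_mul (by positivity), ENNReal.ofReal_mul (norm_nonneg _),
          ENNReal.ofReal_natCast]

/-- Hölder / Cauchy–Schwarz for the lintegral. -/
lemma lintegral_mul_le_sq {X : Type*} [MeasurableSpace X] {ν : Measure X}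
    {f g : X → ℝ≥0∞} (hf : AEMeasurable f ν) (hg : AEMeasurable g ν) :
    ∫⁻ x, f x * g x ∂ν ≤ (∫⁻ x, f x ^ (2:ℝ) ∂ν) ^ (1/2 : ℝ) * (∫⁻ x, g x ^ (2:ℝ) ∂ν) ^ (1/2 : ℝ) := by
  have h := ENNReal.lintegral_mul_le_Lp_mul_Lq ν (⟨by norm_num, by norm_num, by norm_num⟩ : Real.HolderConjugate 2 2) hf hg
  simpa using h

end Helpers

/-- **Flow duality identity** (Proposition 2). For the `x`-parameterized characteristic
flow `∂ₜΦ(t,x) = w(t)Φ(t,x) + b(t,x)`, `Φ(t₀,x) = 0`, and the adjoint flow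
`∂ₜΛ(t,x) = -w(t)ᵀΛ(t,x)`, `Λ(T,x) = Λᵀ(x)`, with `b(t,·)` in `L²` and continuous in
time into `L²`, and `Φ(t,·), Λ(t,·) ∈ L²`, one has
`⟨Φ(T,·), Λᵀ⟩_{L²} = ∫_{t₀}^{T} ⟨b(t,·), Λ(t,·)⟩_{L²} dt`. -/
theorem flow_duality {d : ℕ} (t₀ T : ℝ) (ht : t₀ < T)
    (w : ℝ → Matrix (Fin d) (Fin d) ℝ) (hw : ContinuousOn w (Set.Icc t₀ T))
    (b Φ Λ : ℝ → (Fin d → ℝ) → Fin d → ℝ) (ΛT : (Fin d → ℝ) → Fin d → ℝ)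
    (hbL2 : ∀ t ∈ Set.Icc t₀ T, MemLp (b t) 2 (volume : Measure (Fin d → ℝ)))
    (hbcont : ∀ s ∈ Set.Icc t₀ T,
      Filter.Tendsto (fun t => ∫ x, ‖b t x - b s x‖ ^ 2)
        (nhdsWithin s (Set.Icc t₀ T)) (nhds 0))
    (hΦ : ∀ x, ∀ t ∈ Set.Icc t₀ T,
      HasDerivWithinAt (fun s => Φ s x) (w t *ᵥ Φ t x + b t x) (Set.Icc t₀ T) t)
    (hΦ0 : ∀ x, Φ t₀ x = 0)
    (hΛ : ∀ x, ∀ t ∈ Set.Icc t₀ T,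
      HasDerivWithinAt (fun s => Λ s x) (-((w t)ᵀ *ᵥ Λ t x)) (Set.Icc t₀ T) t)
    (hΛT : ∀ x, Λ T x = ΛT x)
    (hΦL2 : ∀ t ∈ Set.Icc t₀ T, MemLp (Φ t) 2 (volume : Measure (Fin d → ℝ)))
    (hΛL2 : ∀ t ∈ Set.Icc t₀ T, MemLp (Λ t) 2 (volume : Measure (Fin d → ℝ))) :
    ∫ x, Φ T x ⬝ᵥ ΛT x = ∫ t in t₀..T, ∫ x, b t x ⬝ᵥ Λ t x := by
  have ht0I : t₀ ∈ Set.Icc t₀ T := Set.left_mem_Icc.2 ht.le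
  have hTI : T ∈ Set.Icc t₀ T := Set.right_mem_Icc.2 ht.le
  set ν : Measure (Fin d → ℝ) := volume with hν
  set μ : Measure ℝ := volume.restrict (Set.Icc t₀ T) with hμdef
  -- Step 1: derivative of the pairing
  have hg : ∀ x, ∀ t ∈ Set.Icc t₀ T, HasDerivWithinAt (fun s => Φ s x ⬝ᵥ Λ s x)
      (b t x ⬝ᵥ Λ t x) (Set.Icc t₀ T) t := by
    intro x t htI
    have h1i := hasDerivWithinAt_pi.1 (hΦ x t htI)
    have h2i := hasDerivWithinAt_pi.1 (hΛ x t htI)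
    have hsum : HasDerivWithinAt (fun s => ∑ i, Φ s x i * Λ s x i)
        (∑ i, ((w t *ᵥ Φ t x + b t x) i * Λ t x i + Φ t x i * (-((w t)ᵀ *ᵥ Λ t x)) i))
        (Set.Icc t₀ T) t :=
      HasDerivWithinAt.fun_sum fun i _ => (h1i i).mul (h2i i)
    have key : Φ t x ⬝ᵥ ((w t)ᵀ *ᵥ Λ t x) = (w t *ᵥ Φ t x) ⬝ᵥ Λ t x := by
      rw [Matrix.dotProduct_mulVec, Matrix.vecMul_transpose]
    have heq : (∑ i, ((w t *ᵥ Φ t x + b t x) i * Λ t x i + Φ t x i * (-((w t)ᵀ *ᵥ Λ t x)) i))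
        = b t x ⬝ᵥ Λ t x := by
      have expand : ∀ i : Fin d,
          (w t *ᵥ Φ t x + b t x) i * Λ t x i + Φ t x i * (-((w t)ᵀ *ᵥ Λ t x)) i
          = ((w t *ᵥ Φ t x) i * Λ t x i + b t x i * Λ t x i) - Φ t x i * ((w t)ᵀ *ᵥ Λ t x) i := by
        intro i
        simp only [Pi.add_apply, Pi.neg_apply]
        ring
      rw [Finset.sum_congr rfl (fun i _ => expand i), Finset.sum_sub_distrib,
        Finset.sum_add_distrib]
      have e1 : ∑ i, (w t *ᵥ Φ t x) i * Λ t x i = (w t *ᵥ Φ t x) ⬝ᵥ Λ t x := rfl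
      have e2 : ∑ i, b t x i * Λ t x i = b t x ⬝ᵥ Λ t x := rfl
      have e3 : ∑ i, Φ t x i * ((w t)ᵀ *ᵥ Λ t x) i = Φ t x ⬝ᵥ ((w t)ᵀ *ᵥ Λ t x) := rfl
      rw [e1, e2, e3, key]
      ring
    exact heq ▸ hsum
  have hgc : ∀ x, ContinuousOn (fun t => Φ t x ⬝ᵥ Λ t x) (Set.Icc t₀ T) :=
    fun x t htI => (hg x t htI).continuousWithinAt
  have hΛc : ∀ x, ContinuousOn (fun t => Λ t x) (Set.Icc t₀ T) :=
    fun x t htI => (hΛ x t htI).continuousWithinAt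
  -- Step 2: bound on w
  obtain ⟨K, hK0, hKb⟩ : ∃ K, 0 ≤ K ∧ ∀ t ∈ Set.Icc t₀ T, ∀ v : Fin d → ℝ,
      ‖(w t)ᵀ *ᵥ v‖ ≤ K * ‖v‖ := by
    have hS : ContinuousOn (fun t => ∑ i : Fin d, ∑ j : Fin d, |w t i j|) (Set.Icc t₀ T) := by
      refine continuousOn_finset_sum _ (fun i _ => continuousOn_finset_sum _
        (fun j _ => ContinuousOn.abs ?_))
      exact fun t htI =>
        (((continuous_apply j).tendsto _).comp (((continuous_apply i).tendsto _).comp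
          (hw t htI)) : _)
    obtain ⟨C, hC⟩ := isCompact_Icc.exists_bound_of_continuousOn hS
    have hC0 : 0 ≤ C := le_trans (abs_nonneg _) (by simpa [Real.norm_eq_abs] using hC t₀ ht0I)
    refine ⟨C, hC0, fun t htI v => ?_⟩
    have hCt : (∑ i : Fin d, ∑ j : Fin d, |w t i j|) ≤ C :=
      le_trans (le_abs_self _) (by simpa [Real.norm_eq_abs] using hC t htI)
    rw [pi_norm_le_iff_of_nonneg (mul_nonneg hC0 (norm_nonneg v))]
    intro i
    have hrep : ((w t)ᵀ *ᵥ v) i = ∑ j, w t j i * v j := by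
      simp [Matrix.mulVec, dotProduct, Matrix.transpose_apply]
    rw [Real.norm_eq_abs, hrep]
    calc |∑ j, w t j i * v j| ≤ ∑ j, |w t j i * v j| := Finset.abs_sum_le_sum_abs _ _
      _ ≤ ∑ j, |w t j i| * ‖v‖ := by
          refine Finset.sum_le_sum fun j _ => ?_
          rw [abs_mul]
          refine mul_le_mul_of_nonneg_left ?_ (abs_nonneg _)
          simpa [Real.norm_eq_abs] using norm_le_pi_norm v j
      _ = (∑ j, |w t j i|) * ‖v‖ := (Finset.sum_mul _ _ _).symm
      _ ≤ C * ‖v‖ := by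
          refine mul_le_mul_of_nonneg_right (le_trans ?_ hCt) (norm_nonneg v)
          refine Finset.sum_le_sum fun j _ => ?_
          exact Finset.single_le_sum (f := fun i' => |w t j i'|)
            (fun i' _ => abs_nonneg _) (Finset.mem_univ i)
  -- Step 3: Gronwall bound for Λ
  set C₀ : ℝ := Real.exp (K * (T - t₀)) with hC₀def
  have hC₀pos : 0 < C₀ := Real.exp_pos _
  have hΛbd : ∀ t ∈ Set.Icc t₀ T, ∀ x, ‖Λ t x‖ ≤ C₀ * ‖Λ T x‖ := by
    intro t htI x
    have hmaps : ∀ s ∈ Set.Icc t₀ T, t₀ + T - s ∈ Set.Icc t₀ T := by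
      intro s hs
      exact ⟨by linarith [hs.2], by linarith [hs.1]⟩
    have hψc : ContinuousOn (fun s => Λ (t₀ + T - s) x) (Set.Icc t₀ T) := by
      refine (hΛc x).comp ((continuous_const.sub continuous_id).continuousOn) ?_
      intro s hs
      exact hmaps s hs
    have hψd : ∀ s ∈ Set.Ico t₀ T, HasDerivWithinAt (fun s => Λ (t₀ + T - s) x)
        ((w (t₀ + T - s))ᵀ *ᵥ Λ (t₀ + T - s) x) (Set.Ici s) s := by
      intro s hs
      have hu : t₀ + T - s ∈ Set.Icc t₀ T := hmaps s ⟨hs.1, hs.2.le⟩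
      have hinner : HasDerivWithinAt (fun s : ℝ => t₀ + T - s) (-1) (Set.Icc t₀ T) s := by
        simpa using (hasDerivWithinAt_id s (Set.Icc t₀ T)).const_sub (t₀ + T)
      have hcomp := (hΛ x _ hu).scomp s hinner (fun u hu' => hmaps u hu')
      have hmem' : Set.Icc t₀ T ∈ 𝓝[Set.Ici s] s := by
        refine Filter.mem_of_superset (Filter.inter_mem self_mem_nhdsWithin
          (mem_nhdsWithin_of_mem_nhds (Iic_mem_nhds hs.2))) ?_
        rintro u ⟨hu1, hu2⟩
        exact ⟨le_trans hs.1 hu1, hu2⟩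
      have := hcomp.mono_of_mem_nhdsWithin hmem'
      simpa [Function.comp_def] using this
    have hbound : ∀ s ∈ Set.Ico t₀ T,
        ‖(w (t₀ + T - s))ᵀ *ᵥ Λ (t₀ + T - s) x‖ ≤ K * ‖Λ (t₀ + T - s) x‖ + 0 := by
      intro s hs
      rw [add_zero]
      exact hKb _ (hmaps s ⟨hs.1, hs.2.le⟩) _
    have hψ0 : ‖Λ (t₀ + T - t₀) x‖ ≤ ‖Λ T x‖ := by
      rw [show t₀ + T - t₀ = T by ring]
    have hgron := norm_le_gronwallBound_of_norm_deriv_right_le hψc hψd hψ0 hbound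
    have hs' : t₀ + T - t ∈ Set.Icc t₀ T := hmaps t htI
    have := hgron (t₀ + T - t) hs'
    rw [show t₀ + T - (t₀ + T - t) = t by ring] at this
    rw [gronwallBound_ε0] at this
    refine this.trans ?_
    rw [mul_comm C₀ _]
    refine mul_le_mul_of_nonneg_left ?_ (norm_nonneg _)
    rw [hC₀def]
    refine Real.exp_le_exp.2 ?_
    have : t₀ + T - t - t₀ = T - t := by ring
    rw [this]
    nlinarith [htI.1, htI.2]
  -- Step 4: uniform L² bound for b
  obtain ⟨B, hBne, hBbd⟩ : ∃ B : ℝ≥0∞, B ≠ ∞ ∧ ∀ t ∈ Set.Icc t₀ T,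
      (∫⁻ x, (‖b t x‖₊ : ℝ≥0∞) ^ (2:ℝ) ∂ν) ^ (1/2:ℝ) ≤ B := by
    have htri : ∀ s ∈ Set.Icc t₀ T, ∀ t ∈ Set.Icc t₀ T,
        (∫⁻ x, (‖b t x‖₊ : ℝ≥0∞) ^ (2:ℝ) ∂ν) ^ (1/2:ℝ)
          ≤ (∫⁻ x, (‖b s x‖₊ : ℝ≥0∞) ^ (2:ℝ) ∂ν) ^ (1/2:ℝ)
            + (∫⁻ x, (‖b t x - b s x‖₊ : ℝ≥0∞) ^ (2:ℝ) ∂ν) ^ (1/2:ℝ) := by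
      intro s hs t htI
      have hfm : AEMeasurable (fun x => (‖b s x‖₊ : ℝ≥0∞)) ν := (hbL2 s hs).1.enorm
      have hgm' : AEMeasurable (fun x => (‖b t x - b s x‖₊ : ℝ≥0∞)) ν :=
        ((hbL2 t htI).sub (hbL2 s hs)).1.enorm
      have hmono : (∫⁻ x, (‖b t x‖₊ : ℝ≥0∞) ^ (2:ℝ) ∂ν)
          ≤ ∫⁻ x, ((fun x => (‖b s x‖₊ : ℝ≥0∞)) x
              + (fun x => (‖b t x - b s x‖₊ : ℝ≥0∞)) x) ^ (2:ℝ) ∂ν := by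
        refine lintegral_mono fun x => ENNReal.rpow_le_rpow ?_ (by norm_num)
        calc (‖b t x‖₊ : ℝ≥0∞) = (‖b s x + (b t x - b s x)‖₊ : ℝ≥0∞) := by
              rw [add_sub_cancel]
          _ ≤ (‖b s x‖₊ : ℝ≥0∞) + (‖b t x - b s x‖₊ : ℝ≥0∞) := by
              exact_mod_cast nnnorm_add_le _ _
      calc (∫⁻ x, (‖b t x‖₊ : ℝ≥0∞) ^ (2:ℝ) ∂ν) ^ (1/2:ℝ)
          ≤ (∫⁻ x, ((fun x => (‖b s x‖₊ : ℝ≥0∞)) x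
              + (fun x => (‖b t x - b s x‖₊ : ℝ≥0∞)) x) ^ (2:ℝ) ∂ν) ^ (1/2:ℝ) :=
            ENNReal.rpow_le_rpow hmono (by norm_num)
        _ ≤ _ := ENNReal.lintegral_Lp_add_le hfm hgm' one_le_two
    have hsmall : ∀ s ∈ Set.Icc t₀ T, ∃ O : Set ℝ, IsOpen O ∧ s ∈ O ∧
        ∀ t ∈ O, t ∈ Set.Icc t₀ T →
          (∫⁻ x, (‖b t x - b s x‖₊ : ℝ≥0∞) ^ (2:ℝ) ∂ν) ^ (1/2:ℝ) ≤ 1 := by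
      intro s hs
      have h1 : ∀ᶠ t in 𝓝[Set.Icc t₀ T] s,
          (∫⁻ x, (‖b t x - b s x‖₊ : ℝ≥0∞) ^ (2:ℝ) ∂ν) ^ (1/2:ℝ) ≤ 1 := by
        have h2 : ∀ᶠ t in 𝓝[Set.Icc t₀ T] s, (∫ x, ‖b t x - b s x‖ ^ 2 ∂ν) < 1 :=
          (hbcont s hs).eventually_lt_const one_pos
        filter_upwards [h2, eventually_mem_nhdsWithin] with t h2t htI
        have heq : ∫⁻ x, (‖b t x - b s x‖₊ : ℝ≥0∞) ^ (2:ℝ) ∂ν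
            = ENNReal.ofReal (∫ x, ‖b t x - b s x‖ ^ 2 ∂ν) :=
          lintegral_sq_eq_ofReal ((hbL2 t htI).sub (hbL2 s hs))
        rw [heq]
        exact ENNReal.rpow_le_one (ENNReal.ofReal_le_one.2 h2t.le) (by norm_num)
      rw [eventually_nhdsWithin_iff] at h1
      obtain ⟨O, hO1, hO2, hO3⟩ := eventually_nhds_iff.1 h1
      exact ⟨O, hO2, hO3, fun t htO htI => hO1 t htO htI⟩
    classical
    choose! O hOopen hOmem hOsmall using hsmall
    obtain ⟨F, hFI, hFcov⟩ := isCompact_Icc.elim_nhds_subcover O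
      (fun s hs => (hOopen s hs).mem_nhds (hOmem s hs))
    refine ⟨(F.sup fun s => (∫⁻ x, (‖b s x‖₊ : ℝ≥0∞) ^ (2:ℝ) ∂ν) ^ (1/2:ℝ)) + 1, ?_, ?_⟩
    · refine ENNReal.add_ne_top.2 ⟨?_, ENNReal.one_ne_top⟩
      refine ((Finset.sup_lt_iff (by simp : (⊥:ℝ≥0∞) < ∞)).2 fun s hs => ?_).ne
      exact ENNReal.rpow_lt_top_of_nonneg (by norm_num)
        (lintegral_sq_lt_top (hbL2 s (hFI s hs))).ne
    · intro t htI
      obtain ⟨s, hsF, hts⟩ := Set.mem_iUnion₂.1 (hFcov htI)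
      have hsI : s ∈ Set.Icc t₀ T := hFI s hsF
      calc (∫⁻ x, (‖b t x‖₊ : ℝ≥0∞) ^ (2:ℝ) ∂ν) ^ (1/2:ℝ)
          ≤ (∫⁻ x, (‖b s x‖₊ : ℝ≥0∞) ^ (2:ℝ) ∂ν) ^ (1/2:ℝ)
            + (∫⁻ x, (‖b t x - b s x‖₊ : ℝ≥0∞) ^ (2:ℝ) ∂ν) ^ (1/2:ℝ) := htri s hsI t htI
        _ ≤ (F.sup fun s => (∫⁻ x, (‖b s x‖₊ : ℝ≥0∞) ^ (2:ℝ) ∂ν) ^ (1/2:ℝ)) + 1 :=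
            add_le_add (Finset.le_sup (f := fun s =>
              (∫⁻ x, (‖b s x‖₊ : ℝ≥0∞) ^ (2:ℝ) ∂ν) ^ (1/2:ℝ)) hsF)
              (hOsmall s hsI t hts htI)
  -- Step 5: uniform L² bound for Λ
  have hMΛ : (∫⁻ x, (‖Λ T x‖₊ : ℝ≥0∞) ^ (2:ℝ) ∂ν) < ∞ := lintegral_sq_lt_top (hΛL2 T hTI)
  set CΛ : ℝ≥0∞ := (ENNReal.ofReal C₀) ^ (2:ℝ) * ∫⁻ x, (‖Λ T x‖₊ : ℝ≥0∞) ^ (2:ℝ) ∂ν with hCΛdef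
  have hCΛne : CΛ ≠ ∞ := ENNReal.mul_ne_top
    (ENNReal.rpow_ne_top_of_nonneg (by norm_num) ENNReal.ofReal_ne_top) hMΛ.ne
  have hβΛ : ∀ t ∈ Set.Icc t₀ T, (∫⁻ x, (‖Λ t x‖₊ : ℝ≥0∞) ^ (2:ℝ) ∂ν) ≤ CΛ := by
    intro t htI
    have hpw : ∀ x, (‖Λ t x‖₊ : ℝ≥0∞) ^ (2:ℝ)
        ≤ (ENNReal.ofReal C₀) ^ (2:ℝ) * (‖Λ T x‖₊ : ℝ≥0∞) ^ (2:ℝ) := by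
      intro x
      rw [← ENNReal.mul_rpow_of_nonneg _ _ (by norm_num : (0:ℝ) ≤ 2)]
      refine ENNReal.rpow_le_rpow ?_ (by norm_num)
      rw [← enorm_eq_nnnorm, ← enorm_eq_nnnorm, ← ofReal_norm, ← ofReal_norm,
        ← ENNReal.ofReal_mul hC₀pos.le]
      exact ENNReal.ofReal_le_ofReal (hΛbd t htI x)
    calc (∫⁻ x, (‖Λ t x‖₊ : ℝ≥0∞) ^ (2:ℝ) ∂ν)
        ≤ ∫⁻ x, (ENNReal.ofReal C₀) ^ (2:ℝ) * (‖Λ T x‖₊ : ℝ≥0∞) ^ (2:ℝ) ∂ν :=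
          lintegral_mono hpw
      _ = CΛ := lintegral_const_mul' _ _
          (ENNReal.rpow_ne_top_of_nonneg (by norm_num) ENNReal.ofReal_ne_top)
  -- Step 6: joint measurability
  have hL2measg : ∀ t ∈ Set.Icc t₀ T, AEStronglyMeasurable (fun x => Φ t x ⬝ᵥ Λ t x) ν := by
    intro t htI
    have hi : ∀ i : Fin d, AEStronglyMeasurable (fun x => Φ t x i * Λ t x i) ν := fun i =>
      ((continuous_apply i).comp_aestronglyMeasurable (hΦL2 t htI).1).mul
        ((continuous_apply i).comp_aestronglyMeasurable (hΛL2 t htI).1)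
    exact Finset.aestronglyMeasurable_fun_sum Finset.univ fun i _ => hi i
  have hgmJ : AEStronglyMeasurable (fun p : ℝ × (Fin d → ℝ) => Φ p.1 p.2 ⬝ᵥ Λ p.1 p.2)
      (μ.prod ν) :=
    jointly_aesm ht (fun t x => Φ t x ⬝ᵥ Λ t x) hgc hL2measg
  have humem : ∀ (n : ℕ), ∀ t ∈ Set.Icc t₀ T, min (t + 1/((n:ℝ)+1)) T ∈ Set.Icc t₀ T := by
    intro n t htI
    have hpos : (0:ℝ) < 1/((n:ℝ)+1) := by positivity
    exact ⟨le_min (by linarith [htI.1]) ht.le, min_le_right _ _⟩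
  have hqmJ : ∀ n : ℕ, AEStronglyMeasurable (fun p : ℝ × (Fin d → ℝ) =>
      Φ (min (p.1 + 1/((n:ℝ)+1)) T) p.2 ⬝ᵥ Λ (min (p.1 + 1/((n:ℝ)+1)) T) p.2) (μ.prod ν) := by
    intro n
    refine jointly_aesm ht
      (fun t x => Φ (min (t + 1/((n:ℝ)+1)) T) x ⬝ᵥ Λ (min (t + 1/((n:ℝ)+1)) T) x) ?_ ?_
    · intro x
      refine (hgc x).comp
        (((continuous_id.add continuous_const).min continuous_const).continuousOn) ?_
      intro t htI
      exact humem n t htI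
    · intro t htI
      exact hL2measg _ (humem n t htI)
  have hae_Ico : ∀ᵐ p ∂(μ.prod ν), p.1 ∈ Set.Ico t₀ T := by
    rw [ae_iff]
    refine measure_mono_null (fun p hp => ?_)
      (?_ : (μ.prod ν) (((Set.Ico t₀ T)ᶜ) ×ˢ Set.univ) = 0)
    · exact ⟨hp, trivial⟩
    · rw [Measure.prod_prod]
      have h0 : μ ((Set.Ico t₀ T)ᶜ) = 0 := by
        rw [hμdef, Measure.restrict_apply' measurableSet_Icc]
        refine measure_mono_null (fun s hs => ?_) (measure_singleton T)
        rcases hs with ⟨hs1, hs2⟩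
        simp only [Set.mem_compl_iff, Set.mem_Ico, not_and, not_lt] at hs1
        simp [le_antisymm hs2.2 (hs1 hs2.1)]
      rw [h0, zero_mul]
  have hcmJ : AEStronglyMeasurable (fun p : ℝ × (Fin d → ℝ) => b p.1 p.2 ⬝ᵥ Λ p.1 p.2)
      (μ.prod ν) := by
    refine aestronglyMeasurable_of_tendsto_ae atTop (f := fun (n : ℕ) (p : ℝ × (Fin d → ℝ)) =>
      (Φ (min (p.1 + 1/((n:ℝ)+1)) T) p.2 ⬝ᵥ Λ (min (p.1 + 1/((n:ℝ)+1)) T) p.2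
        - Φ p.1 p.2 ⬝ᵥ Λ p.1 p.2) / (min (p.1 + 1/((n:ℝ)+1)) T - p.1)) (fun n => ?_) ?_
    · refine aestronglyMeasurable_iff_aemeasurable.2 ?_
      refine AEMeasurable.div (((hqmJ n).sub hgmJ).aemeasurable) (Continuous.aemeasurable ?_)
      exact ((continuous_fst.add continuous_const).min continuous_const).sub continuous_fst
    · filter_upwards [hae_Ico] with p hp
      obtain ⟨t, x⟩ := p
      simp only at hp ⊢
      have hd := hg x t ⟨hp.1, hp.2.le⟩
      rw [hasDerivWithinAt_iff_tendsto_slope] at hd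
      have hpos : ∀ n : ℕ, t < min (t + 1/((n:ℝ)+1)) T := by
        intro n
        have h1 : (0:ℝ) < 1/((n:ℝ)+1) := by positivity
        exact lt_min (by linarith) hp.2
      have humem' : ∀ n : ℕ, min (t + 1/((n:ℝ)+1)) T ∈ Set.Icc t₀ T \ {t} := by
        intro n
        refine ⟨humem n t ⟨hp.1, hp.2.le⟩, ?_⟩
        simp only [Set.mem_singleton_iff]
        exact (ne_of_gt (hpos n))
      have hu : Tendsto (fun n : ℕ => min (t + 1/((n:ℝ)+1)) T) atTop
          (𝓝[Set.Icc t₀ T \ {t}] t) := by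
        rw [tendsto_nhdsWithin_iff]
        refine ⟨?_, Filter.Eventually.of_forall humem'⟩
        have h1 : Tendsto (fun n : ℕ => t + 1/((n:ℝ)+1)) atTop (𝓝 (t + 0)) :=
          tendsto_const_nhds.add tendsto_one_div_add_atTop_nhds_zero_nat
        rw [add_zero] at h1
        exact tendsto_of_tendsto_of_tendsto_of_le_of_le tendsto_const_nhds h1
          (fun n => (hpos n).le) (fun n => min_le_left _ _)
      refine (hd.comp hu).congr fun n => ?_
      rw [Function.comp_apply, slope_def_field]
  -- Step 7: product integrability
  have hcInt : Integrable (fun p : ℝ × (Fin d → ℝ) => b p.1 p.2 ⬝ᵥ Λ p.1 p.2) (μ.prod ν) := by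
    refine ⟨hcmJ, ?_⟩
    have hinner : ∀ t ∈ Set.Icc t₀ T, (∫⁻ x, (‖b t x ⬝ᵥ Λ t x‖₊ : ℝ≥0∞) ∂ν)
        ≤ (d : ℝ≥0∞) * (B * CΛ ^ (1/2:ℝ)) := by
      intro t htI
      calc (∫⁻ x, (‖b t x ⬝ᵥ Λ t x‖₊ : ℝ≥0∞) ∂ν)
          ≤ ∫⁻ x, (d : ℝ≥0∞) * ((‖b t x‖₊ : ℝ≥0∞) * (‖Λ t x‖₊ : ℝ≥0∞)) ∂ν :=
            lintegral_mono fun x => nnnorm_dotProduct_le _ _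
        _ = (d : ℝ≥0∞) * ∫⁻ x, (‖b t x‖₊ : ℝ≥0∞) * (‖Λ t x‖₊ : ℝ≥0∞) ∂ν :=
            lintegral_const_mul' _ _ (by simp)
        _ ≤ (d : ℝ≥0∞) * ((∫⁻ x, (‖b t x‖₊ : ℝ≥0∞) ^ (2:ℝ) ∂ν) ^ (1/2:ℝ)
              * (∫⁻ x, (‖Λ t x‖₊ : ℝ≥0∞) ^ (2:ℝ) ∂ν) ^ (1/2:ℝ)) :=
            mul_le_mul_right (lintegral_mul_le_sq (hbL2 t htI).1.enorm
              (hΛL2 t htI).1.enorm) _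
        _ ≤ (d : ℝ≥0∞) * (B * CΛ ^ (1/2:ℝ)) :=
            mul_le_mul_right (mul_le_mul' (hBbd t htI)
              (ENNReal.rpow_le_rpow (hβΛ t htI) (by norm_num))) _
    have hfin : (∫⁻ p, (‖b p.1 p.2 ⬝ᵥ Λ p.1 p.2‖₊ : ℝ≥0∞) ∂(μ.prod ν)) < ∞ := by
      rw [lintegral_prod (fun p => (‖b p.1 p.2 ⬝ᵥ Λ p.1 p.2‖₊ : ℝ≥0∞)) hcmJ.enorm]
      calc ∫⁻ t, ∫⁻ x, (‖b t x ⬝ᵥ Λ t x‖₊ : ℝ≥0∞) ∂ν ∂μ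
          ≤ ∫⁻ _, (d : ℝ≥0∞) * (B * CΛ ^ (1/2:ℝ)) ∂μ := by
            refine lintegral_mono_ae ?_
            filter_upwards [ae_restrict_mem measurableSet_Icc] with t htI using hinner t htI
        _ = (d : ℝ≥0∞) * (B * CΛ ^ (1/2:ℝ)) * μ Set.univ := lintegral_const _
        _ < ∞ := by
            refine ENNReal.mul_lt_top ?_ ?_
            · refine ENNReal.mul_lt_top (by simp) ?_
              exact ENNReal.mul_lt_top hBne.lt_top
                (ENNReal.rpow_lt_top_of_nonneg (by norm_num) hCΛne)
            · rw [hμdef, Measure.restrict_apply_univ, Real.volume_Icc]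
              exact ENNReal.ofReal_lt_top
    exact hfin
  -- Step 8: a.e. pointwise duality via FTC
  have haeq : ∀ᵐ x ∂ν, Φ T x ⬝ᵥ ΛT x = ∫ t in t₀..T, b t x ⬝ᵥ Λ t x := by
    filter_upwards [hcInt.prod_left_ae] with x hx
    have hii : IntervalIntegrable (fun t => b t x ⬝ᵥ Λ t x) volume t₀ T := by
      rw [intervalIntegrable_iff_integrableOn_Ioc_of_le ht.le]
      have hx' : IntegrableOn (fun t => b t x ⬝ᵥ Λ t x) (Set.Icc t₀ T) volume := hx
      exact hx'.mono_set Set.Ioc_subset_Icc_self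
    have hftc := intervalIntegral.integral_eq_sub_of_hasDeriv_right_of_le ht.le (hgc x)
      (fun s hs => (hg x s ⟨hs.1.le, hs.2.le⟩).mono_of_mem_nhdsWithin ?_) hii
    · have h0 : Φ t₀ x ⬝ᵥ Λ t₀ x = 0 := by rw [hΦ0 x, zero_dotProduct]
      rw [h0, sub_zero, hΛT x] at hftc
      exact hftc.symm
    · refine Filter.mem_of_superset (Filter.inter_mem self_mem_nhdsWithin
        (mem_nhdsWithin_of_mem_nhds (Iio_mem_nhds hs.2))) ?_
      rintro u ⟨hu1, hu2⟩
      exact ⟨le_trans hs.1.le hu1.le, hu2.le⟩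
  -- Step 9: Fubini and conclusion
  have hrestr : volume.restrict (Set.Ioc t₀ T) = μ := by
    rw [hμdef]
    exact Measure.restrict_congr_set Ioc_ae_eq_Icc
  have hswap := integral_integral_swap (f := fun t x => b t x ⬝ᵥ Λ t x)
    (μ := μ) (ν := ν) hcInt
  calc ∫ x, Φ T x ⬝ᵥ ΛT x ∂ν = ∫ x, (∫ t in t₀..T, b t x ⬝ᵥ Λ t x) ∂ν :=
        integral_congr_ae haeq
    _ = ∫ x, (∫ t, b t x ⬝ᵥ Λ t x ∂μ) ∂ν := by
        refine integral_congr_ae (Filter.Eventually.of_forall fun x => ?_)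
        show (∫ t in t₀..T, b t x ⬝ᵥ Λ t x) = ∫ t, b t x ⬝ᵥ Λ t x ∂μ
        rw [intervalIntegral.integral_of_le ht.le, hrestr]
    _ = ∫ t, (∫ x, b t x ⬝ᵥ Λ t x ∂ν) ∂μ := hswap.symm
    _ = ∫ t in t₀..T, ∫ x, b t x ⬝ᵥ Λ t x ∂ν := by
        rw [intervalIntegral.integral_of_le ht.le, hrestr]
end

section
/- Let $t_0 < T$, $d \in \mathbb{N}$, and let $w : [t_0,T] \to \mathbb{R}^{d\times d}$ be continuous. Define the parameterized HUM map $\Gamma_\Phi : L^2(\mathbb{R}^d;\mathbb{R}^d) \to L^2(\mathbb{R}^d;\mathbb{R}^d)$ by $\Gamma_\Phi(\Lambda^T) = \Phi(T,\cdot)$, where for each $x \in \mathbb{R}^d$, $\Lambda(\cdot,x)$ solves $\partial_t \Lambda(t,x) = -w(t)^{\mathsf{tr}} \Lambda(t,x)$, $\Lambda(T,x) = \Lambda^T(x)$, and $\Phi(\cdot,x)$ solves $\partial_t \Phi(t,x) = w(t)\Phi(t,x) + \Lambda(t,x)$, $\Phi(t_0,x) = 0$. Define the reachable set $\mathcal{R}_\Phi$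 as the set of all $y \in L^2(\mathbb{R}^d;\mathbb{R}^d)$ such that there exists a control $b$ with $b(t,\cdot) \in L^2(\mathbb{R}^d;\mathbb{R}^d)$, $(t,x) \mapsto b(t,x)$ jointly measurable and $t \mapsto b(t,\cdot)$ continuous into $L^2$, for which the solution of $\partial_t \Phi(t,x) = w(t)\Phi(t,x) + b(t,x)$, $\Phi(t_0,x) = 0$, satisfies $\Phi(T,\cdot) = y$ in $L^2$. Then $\mathcal{R}_\Phi = \Gamma_\Phi(L^2(\mathbb{R}^d;\mathbb{R}^d))$. -/
open Set MeasureTheory Matrix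

section ODE

variable {E : Type*} [NormedAddCommGroup E] [NormedSpace ℝ E] [CompleteSpace E]

lemma ode_local (v : ℝ → E → E) (a b : ℝ) (K : NNReal) (B : ℝ) (hB : 0 ≤ B)
    (hlip : ∀ t ∈ Icc a b, LipschitzWith K (v t))
    (hcont : ∀ x, ContinuousOn (fun t => v t x) (Icc a b))
    (hBb : ∀ t ∈ Icc a b, ‖v t 0‖ ≤ B)
    {s : ℝ} (hs : s ∈ Icc a b) (X : E) :
    ∃ g : ℝ → E, g s = X ∧ ∀ t ∈ Icc s (min (s + (B + 2*(K:ℝ) + 1)⁻¹) b),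
      HasDerivWithinAt g (v t (g t)) (Icc s (min (s + (B + 2*(K:ℝ) + 1)⁻¹) b)) t := by
  have hKnn : (0:ℝ) ≤ (K:ℝ) := K.coe_nonneg
  set ε := (B + 2*(K:ℝ) + 1)⁻¹ with hε
  have hpos : (0:ℝ) < B + 2*(K:ℝ) + 1 := by linarith
  have hεpos : 0 < ε := inv_pos.mpr hpos
  set m := min (s + ε) b with hm
  have hsm : s ≤ m := le_min (by linarith) hs.2
  have hsub : Icc s m ⊆ Icc a b := Icc_subset_Icc hs.1 (min_le_right _ _)
  have hpl : IsPicardLindelof v (tmin := s) (tmax := m) ⟨s, le_refl s, hsm⟩ X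
      ⟨‖X‖+1, by positivity⟩ 0 ⟨B + K*(2*‖X‖+1), by positivity⟩ K :=
    { lipschitzOnWith := fun t htm => (hlip t (hsub htm)).lipschitzOnWith
      continuousOn := fun x _ => (hcont x).mono hsub
      norm_le := fun t htm x hx => by
        show ‖v t x‖ ≤ B + K*(2*‖X‖+1)
        have h1 : ‖v t x - v t 0‖ ≤ K * ‖x - 0‖ := by
          simpa [dist_eq_norm] using (hlip t (hsub htm)).dist_le_mul x 0
        rw [sub_zero] at h1
        have h2 : ‖x‖ ≤ ‖X‖ + (‖X‖+1) := by
          have h3 : ‖x - X‖ ≤ ‖X‖ + 1 := mem_closedBall_iff_norm.mp hx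
          have h4 : ‖x‖ ≤ ‖x - X‖ + ‖X‖ := by
            simpa using norm_add_le (x - X) X
          linarith
        have h5 : ‖v t 0‖ ≤ B := hBb t (hsub htm)
        calc ‖v t x‖ = ‖v t 0 + (v t x - v t 0)‖ := by rw [add_sub_cancel]
          _ ≤ ‖v t 0‖ + ‖v t x - v t 0‖ := norm_add_le _ _
          _ ≤ B + K*(2*‖X‖+1) := by nlinarith
      mul_max_le := by
        show (B + (K:ℝ)*(2*‖X‖+1)) * max (m-s) (s-s) ≤ (‖X‖ + 1) - 0
        rw [sub_zero]
        have h1 : max (m - s) (s - s) ≤ ε := by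
          apply max_le
          · have : m ≤ s + ε := min_le_left _ _
            linarith
          · linarith
        have hC : (0:ℝ) ≤ B + K*(2*‖X‖+1) := by positivity
        calc (B + (K:ℝ)*(2*‖X‖+1)) * max (m-s) (s-s)
            ≤ (B + K*(2*‖X‖+1)) * ε := mul_le_mul_of_nonneg_left h1 hC
          _ ≤ ‖X‖ + 1 := by
              rw [hε, ← div_eq_mul_inv, div_le_iff₀ hpos]
              nlinarith [norm_nonneg X] }
  exact hpl.exists_eq_forall_mem_Icc_hasDerivWithinAt₀

lemma ode_global (v : ℝ → E → E) (a b : ℝ) (hab : a ≤ b) (K : NNReal)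
    (hlip : ∀ t ∈ Icc a b, LipschitzWith K (v t))
    (hcont : ∀ x, ContinuousOn (fun t => v t x) (Icc a b)) (X : E) :
    ∃ f : ℝ → E, f a = X ∧ ∀ t ∈ Icc a b,
      HasDerivWithinAt f (v t (f t)) (Icc a b) t := by
  -- bound on ‖v t 0‖
  obtain ⟨t₁, -, ht₁⟩ := isCompact_Icc.exists_isMaxOn (nonempty_Icc.mpr hab)
    ((hcont 0).norm)
  set B := max ‖v t₁ 0‖ 0 with hB
  have hB0 : 0 ≤ B := le_max_right _ _
  have hBb : ∀ t ∈ Icc a b, ‖v t 0‖ ≤ B := fun t htm =>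
    le_trans (ht₁ htm) (le_max_left _ _)
  set ε := (B + 2*(K:ℝ) + 1)⁻¹ with hε
  have hpos : (0:ℝ) < B + 2*(K:ℝ) + 1 := by
    have := K.coe_nonneg; linarith
  have hεpos : 0 < ε := inv_pos.mpr hpos
  -- induction
  have main : ∀ n : ℕ, ∃ f : ℝ → E, f a = X ∧ ∀ t ∈ Icc a (min (a + n*ε) b),
      HasDerivWithinAt f (v t (f t)) (Icc a (min (a + n*ε) b)) t := by
    intro n
    induction n with
    | zero =>
      refine ⟨fun _ => X, rfl, ?_⟩
      have : min (a + (0:ℕ)*ε) b = a := by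
        simp [min_eq_left hab]
      rw [this]
      intro t htm
      have ht : t = a := le_antisymm htm.2 htm.1
      subst ht
      rw [Icc_self]
      rw [hasDerivWithinAt_iff_hasFDerivWithinAt]
      simp only [HasFDerivWithinAt, nhdsWithin_singleton, hasFDerivAtFilter_iff_isLittleO,
        Asymptotics.isLittleO_pure]
      simp
    | succ n ih =>
      obtain ⟨f, hfa, hf⟩ := ih
      set m := min (a + n*ε) b with hm
      have hnε : (0:ℝ) ≤ n*ε := by positivity
      have ham : a ≤ m := le_min (by linarith) hab
      have hmb : m ≤ b := min_le_right _ _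
      have hmab : m ∈ Icc a b := ⟨ham, hmb⟩
      obtain ⟨g, hgm, hg⟩ := ode_local v a b K B hB0 hlip hcont hBb hmab (f m)
      set m' := min (m + ε) b with hm'
      have hmm' : m ≤ m' := le_min (by linarith) hmb
      have hm'eq : m' = min (a + (n+1:ℕ)*ε) b := by
        rcases le_total (a + n*ε) b with h | h
        · have : m = a + n*ε := min_eq_left h
          rw [hm', this]
          congr 1
          push_cast
          ring
        · have h1 : m = b := min_eq_right h
          have h2 : b ≤ a + ((n:ℕ)+1:ℕ)*ε := by push_cast; nlinarith
          rw [hm', h1, min_eq_right (by linarith : b ≤ b + ε), min_eq_right h2]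
      refine ⟨fun t => if t ≤ m then f t else g t, by simp only [if_pos ham, hfa], ?_⟩
      rw [← hm'eq]
      set h := fun t => if t ≤ m then f t else g t with hh
      have hEqf : EqOn h f (Icc a m) := fun t htm => if_pos htm.2
      have hEqg : EqOn h g (Icc m m') := by
        intro t htm
        rcases le_or_gt t m with h1 | h1
        · have : t = m := le_antisymm h1 htm.1
          subst this
          simp only [hh, if_pos le_rfl, hgm]
        · exact if_neg (not_le.mpr h1)
      have hunion : Icc a m' = Icc a m ∪ Icc m m' := (Icc_union_Icc_eq_Icc ham hmm').symm
      intro t htm'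
      have H1 : HasDerivWithinAt h (v t (h t)) (Icc a m) t := by
        rcases le_or_gt t m with h1 | h1
        · have htam : t ∈ Icc a m := ⟨htm'.1, h1⟩
          have hval : h t = f t := hEqf htam
          have := (hf t htam).congr hEqf hval
          rw [hval]
          exact this
        · rw [hasDerivWithinAt_iff_hasFDerivWithinAt]
          apply HasFDerivWithinAt.of_notMem_closure
          rw [closure_Icc]
          exact fun hc => absurd hc.2 (not_le.mpr h1)
      have H2 : HasDerivWithinAt h (v t (h t)) (Icc m m') t := by
        rcases le_or_gt m t with h1 | h1
        · have htmm : t ∈ Icc m m' := ⟨h1, htm'.2⟩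
          have hval : h t = g t := hEqg htmm
          have := (hg t htmm).congr hEqg hval
          rw [hval]
          exact this
        · rw [hasDerivWithinAt_iff_hasFDerivWithinAt]
          apply HasFDerivWithinAt.of_notMem_closure
          rw [closure_Icc]
          exact fun hc => absurd hc.1 (not_le.mpr h1)
      rw [hunion]
      exact H1.union H2
  obtain ⟨n, hn⟩ := exists_nat_ge ((b - a)/ε)
  obtain ⟨f, hfa, hf⟩ := main n
  have : min (a + n*ε) b = b := by
    rw [min_eq_right]
    rw [div_le_iff₀ hεpos] at hn
    linarith
  rw [this] at hf
  exact ⟨f, hfa, hf⟩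

end ODE

lemma ode_global_cont {E : Type*} [NormedAddCommGroup E] [NormedSpace ℝ E] [CompleteSpace E]
    (v : ℝ → E → E) (a b : ℝ) (hab : a ≤ b) (K : NNReal)
    (hlip : ∀ t ∈ Icc a b, LipschitzWith K (v t))
    (hcont : ∀ x, ContinuousOn (fun t => v t x) (Icc a b)) (X : E) :
    ∃ f : ℝ → E, Continuous f ∧ f a = X ∧ ∀ t ∈ Icc a b,
      HasDerivWithinAt f (v t (f t)) (Icc a b) t := by
  obtain ⟨f, hfa, hf⟩ := ode_global v a b hab K hlip hcont X
  have hfc : ContinuousOn f (Icc a b) := fun t htm => (hf t htm).continuousWithinAt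
  set fc := fun t => f (projIcc a b hab t) with hfc'
  have hEq : EqOn fc f (Icc a b) := fun t htm => by
    simp only [hfc', projIcc_of_mem hab htm]
  refine ⟨fc, ?_, ?_, ?_⟩
  · exact (continuousOn_iff_continuous_restrict.mp hfc).comp continuous_projIcc
  · rw [hEq (left_mem_Icc.mpr hab), hfa]
  · intro t htm
    have hval : fc t = f t := hEq htm
    have := (hf t htm).congr hEq hval
    rw [hval]
    exact this

namespace HUMaux

variable {d : ℕ}

/-- entrywise absolute sum of a matrix -/
noncomputable def S (M : Matrix (Fin d) (Fin d) ℝ) : ℝ := ∑ i, ∑ j, |M i j|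

lemma S_nonneg (M : Matrix (Fin d) (Fin d) ℝ) : 0 ≤ S M :=
  Finset.sum_nonneg fun _ _ => Finset.sum_nonneg fun _ _ => abs_nonneg _

lemma S_continuous : Continuous (S (d := d)) := by
  refine continuous_finset_sum _ fun i _ => continuous_finset_sum _ fun j _ => ?_
  exact (Continuous.matrix_elem continuous_id i j).abs

lemma norm_mulVec_le (M : Matrix (Fin d) (Fin d) ℝ) (u : Fin d → ℝ) :
    ‖M *ᵥ u‖ ≤ S M * ‖u‖ := by
  rcases isEmpty_or_nonempty (Fin d) with h | h
  · simp [norm_eq_zero.mpr (Subsingleton.elim _ 0), mul_nonneg (S_nonneg M) (norm_nonneg u)]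
  rw [pi_norm_le_iff_of_nonneg (mul_nonneg (S_nonneg M) (norm_nonneg u))]
  intro i
  have h1 : ‖(M *ᵥ u) i‖ = |∑ j, M i j * u j| := rfl
  rw [h1]
  calc |∑ j, M i j * u j| ≤ ∑ j, |M i j * u j| := Finset.abs_sum_le_sum_abs _ _
    _ ≤ ∑ j, |M i j| * ‖u‖ := by
        refine Finset.sum_le_sum fun j _ => ?_
        rw [abs_mul]
        exact mul_le_mul_of_nonneg_left (norm_le_pi_norm u j) (abs_nonneg _)
    _ = (∑ j, |M i j|) * ‖u‖ := (Finset.sum_mul _ _ _).symm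
    _ ≤ S M * ‖u‖ := by
        refine mul_le_mul_of_nonneg_right ?_ (norm_nonneg u)
        exact Finset.single_le_sum (f := fun i => ∑ j, |M i j|)
          (fun i _ => Finset.sum_nonneg fun _ _ => abs_nonneg _) (Finset.mem_univ i)

lemma measurable_mulVec {g : (Fin d → ℝ) → Fin d → ℝ} (hgm : Measurable g)
    (M : Matrix (Fin d) (Fin d) ℝ) : Measurable fun x => M *ᵥ g x := by
  refine measurable_pi_lambda _ fun i => ?_
  show Measurable fun x => ∑ j, M i j * g x j
  refine Finset.measurable_sum _ fun j _ => measurable_const.mul ?_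
  exact (measurable_pi_apply j).comp hgm

lemma memLp_mulVec {g : (Fin d → ℝ) → Fin d → ℝ} (hgm : Measurable g)
    (hg : MemLp g 2 (volume : Measure (Fin d → ℝ))) (M : Matrix (Fin d) (Fin d) ℝ) :
    MemLp (fun x => M *ᵥ g x) 2 (volume : Measure (Fin d → ℝ)) :=
  MemLp.of_le_mul hg (measurable_mulVec hgm M).aestronglyMeasurable
    (Filter.Eventually.of_forall fun x => norm_mulVec_le M (g x))

lemma int_sq_mulVec {g : (Fin d → ℝ) → Fin d → ℝ} (hgm : Measurable g)
    (hg : MemLp g 2 (volume : Measure (Fin d → ℝ))) (M : Matrix (Fin d) (Fin d) ℝ) :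
    ∫ x, ‖M *ᵥ g x‖ ^ 2 ≤ (S M)^2 * ∫ x, ‖g x‖ ^ 2 := by
  have h1 : Integrable (fun x => ‖g x‖ ^ 2) (volume : Measure (Fin d → ℝ)) :=
    (memLp_two_iff_integrable_sq_norm hg.1).mp hg
  have hM := memLp_mulVec hgm hg M
  have h2 : Integrable (fun x => ‖M *ᵥ g x‖ ^ 2) (volume : Measure (Fin d → ℝ)) :=
    (memLp_two_iff_integrable_sq_norm hM.1).mp hM
  calc ∫ x, ‖M *ᵥ g x‖ ^ 2 ≤ ∫ x, (S M)^2 * ‖g x‖ ^ 2 := by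
        refine integral_mono h2 (h1.const_mul _) fun x => ?_
        have h3 := norm_mulVec_le M (g x)
        have h4 : (0:ℝ) ≤ ‖M *ᵥ g x‖ := norm_nonneg _
        have h5 : (0:ℝ) ≤ ‖g x‖ := norm_nonneg _
        have h6 := S_nonneg M
        nlinarith
    _ = (S M)^2 * ∫ x, ‖g x‖ ^ 2 := integral_const_mul _ _

lemma hasDerivWithinAt_mulVec' {f : ℝ → Matrix (Fin d) (Fin d) ℝ} {f' : Matrix (Fin d) (Fin d) ℝ}
    {u : ℝ → Fin d → ℝ} {u' : Fin d → ℝ} {s : Set ℝ} {t : ℝ}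
    (hf : ∀ i j, HasDerivWithinAt (fun τ => f τ i j) (f' i j) s t)
    (hu : HasDerivWithinAt u u' s t) :
    HasDerivWithinAt (fun τ => f τ *ᵥ u τ) (f' *ᵥ u t + f t *ᵥ u') s t := by
  rw [hasDerivWithinAt_pi]
  intro i
  have h1 : ∀ j ∈ Finset.univ, HasDerivWithinAt (fun τ => f τ i j * u τ j)
      (f' i j * u t j + f t i j * u' j) s t := fun j _ =>
    (hf i j).mul (hasDerivWithinAt_pi.mp hu j)
  have hsum := HasDerivWithinAt.fun_sum h1
  have h2 : (f' *ᵥ u t + f t *ᵥ u') i = ∑ j, (f' i j * u t j + f t i j * u' j) := by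
    simp [Matrix.mulVec, dotProduct, Finset.sum_add_distrib]
  rw [h2]
  exact hsum

lemma intervalIntegral_proj {a b : ℝ} {f : ℝ → Fin d → ℝ}
    (hf : IntervalIntegrable f MeasureTheory.volume a b) (i : Fin d) :
    (∫ s in a..b, f s) i = ∫ s in a..b, f s i :=
  ((ContinuousLinearMap.proj (R := ℝ) (φ := fun _ : Fin d => ℝ) i).intervalIntegral_comp_comm
    hf).symm

noncomputable def mulVecCLM (A : Matrix (Fin d) (Fin d) ℝ) : (Fin d → ℝ) →L[ℝ] (Fin d → ℝ) :=
  A.mulVecLin.toContinuousLinearMap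

lemma mulVecCLM_apply (A : Matrix (Fin d) (Fin d) ℝ) (v : Fin d → ℝ) :
    mulVecCLM A v = A *ᵥ v := rfl

lemma mulVec_intervalIntegral {a b : ℝ} (A : Matrix (Fin d) (Fin d) ℝ) {f : ℝ → Fin d → ℝ}
    (hf : IntervalIntegrable f MeasureTheory.volume a b) :
    A *ᵥ (∫ s in a..b, f s) = ∫ s in a..b, A *ᵥ f s := by
  have h := (mulVecCLM A).intervalIntegral_comp_comm hf
  simp only [mulVecCLM_apply] at h
  exact h.symm

lemma intervalIntegrable_proj {a b : ℝ} {f : ℝ → Fin d → ℝ}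
    (hf : IntervalIntegrable f MeasureTheory.volume a b) (i : Fin d) :
    IntervalIntegrable (fun s => f s i) MeasureTheory.volume a b :=
  ⟨(ContinuousLinearMap.proj (R := ℝ) (φ := fun _ : Fin d => ℝ) i).integrable_comp hf.1,
   (ContinuousLinearMap.proj (R := ℝ) (φ := fun _ : Fin d => ℝ) i).integrable_comp hf.2⟩

lemma dotProduct_intervalIntegral {a b : ℝ} (v : Fin d → ℝ) {f : ℝ → Fin d → ℝ}
    (hf : IntervalIntegrable f MeasureTheory.volume a b) :
    v ⬝ᵥ (∫ s in a..b, f s) = ∫ s in a..b, v ⬝ᵥ f s := by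
  calc v ⬝ᵥ (∫ s in a..b, f s) = ∑ i, v i * (∫ s in a..b, f s) i := rfl
    _ = ∑ i, v i * ∫ s in a..b, f s i := by
        refine Finset.sum_congr rfl fun i _ => ?_
        rw [intervalIntegral_proj hf i]
    _ = ∑ i, ∫ s in a..b, v i * f s i := by
        refine Finset.sum_congr rfl fun i _ => ?_
        rw [intervalIntegral.integral_const_mul]
    _ = ∫ s in a..b, ∑ i, v i * f s i :=
        (intervalIntegral.integral_finset_sum fun i _ =>
          (intervalIntegrable_proj hf i).const_mul _).symm
    _ = ∫ s in a..b, v ⬝ᵥ f s := rfl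

/-- Existence of continuous fundamental solutions `W` (of `W' = w W`, `W t₀ = 1`) and
`V` (of `V' = -V w`, `V t₀ = 1`), inverse to each other. -/
lemma exists_flow (t₀ T : ℝ) (ht : t₀ < T) (w : ℝ → Matrix (Fin d) (Fin d) ℝ)
    (hw : ContinuousOn w (Icc t₀ T)) :
    ∃ W V : ℝ → Matrix (Fin d) (Fin d) ℝ, Continuous W ∧ Continuous V ∧
      (∀ i j, ∀ t ∈ Icc t₀ T,
        HasDerivWithinAt (fun τ => W τ i j) ((w t * W t) i j) (Icc t₀ T) t) ∧
      (∀ i j, ∀ t ∈ Icc t₀ T,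
        HasDerivWithinAt (fun τ => V τ i j) ((-(V t * w t)) i j) (Icc t₀ T) t) ∧
      (∀ t ∈ Icc t₀ T, V t * W t = 1) ∧ (∀ t ∈ Icc t₀ T, W t * V t = 1) := by
  classical
  set wc := fun t => w (projIcc t₀ T ht.le t) with hwc
  have hwcc : Continuous wc :=
    (continuousOn_iff_continuous_restrict.mp hw).comp continuous_projIcc
  have hwceq : ∀ t ∈ Icc t₀ T, wc t = w t := fun t htm => by
    simp only [hwc, projIcc_of_mem ht.le htm]
  -- Lipschitz bound
  obtain ⟨t₁, -, ht₁⟩ := isCompact_Icc.exists_isMaxOn (nonempty_Icc.mpr ht.le)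
    ((S_continuous.comp hwcc).continuousOn (s := Icc t₀ T))
  set K : NNReal := (max (S (wc t₁)) 0).toNNReal with hK
  have hKb : ∀ t ∈ Icc t₀ T, S (wc t) ≤ K := fun t htm => by
    have h1 := ht₁ htm
    have h2 : (K : ℝ) = max (S (wc t₁)) 0 := Real.coe_toNNReal _ (le_max_right _ _)
    rw [h2]
    exact le_trans h1 (le_max_left _ _)
  have hKbT : ∀ t ∈ Icc t₀ T, S ((wc t)ᵀ) ≤ K := fun t htm => by
    have h3 : S ((wc t)ᵀ) = S (wc t) := by
      simp only [S, Matrix.transpose_apply]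
      exact Finset.sum_comm
    rw [h3]; exact hKb t htm
  have hlip : ∀ (A : ℝ → Matrix (Fin d) (Fin d) ℝ), (∀ t ∈ Icc t₀ T, S (A t) ≤ K) →
      ∀ t ∈ Icc t₀ T, LipschitzWith K fun x => A t *ᵥ x := by
    intro A hA t htm
    refine LipschitzWith.of_dist_le_mul fun x y => ?_
    rw [dist_eq_norm, dist_eq_norm]
    have h1 : A t *ᵥ x - A t *ᵥ y = A t *ᵥ (x - y) := (Matrix.mulVec_sub _ _ _).symm
    rw [h1]
    calc ‖A t *ᵥ (x - y)‖ ≤ S (A t) * ‖x - y‖ := norm_mulVec_le _ _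
      _ ≤ K * ‖x - y‖ := mul_le_mul_of_nonneg_right (hA t htm) (norm_nonneg _)
  have hcont1 : ∀ x, ContinuousOn (fun t => wc t *ᵥ x) (Icc t₀ T) :=
    fun x => (hwcc.matrix_mulVec continuous_const).continuousOn
  have hcont2 : ∀ x : Fin d → ℝ, ContinuousOn (fun t => -((wc t)ᵀ *ᵥ x)) (Icc t₀ T) :=
    fun x => ((hwcc.matrix_transpose.matrix_mulVec continuous_const).neg).continuousOn
  have hlip2 : ∀ t ∈ Icc t₀ T, LipschitzWith K fun x : Fin d → ℝ => -((wc t)ᵀ *ᵥ x) := by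
    intro t htm
    have h1 := hlip (fun t => (wc t)ᵀ) hKbT t htm
    refine LipschitzWith.of_dist_le_mul fun x y => ?_
    calc dist (-((wc t)ᵀ *ᵥ x)) (-((wc t)ᵀ *ᵥ y)) = dist ((wc t)ᵀ *ᵥ x) ((wc t)ᵀ *ᵥ y) :=
          dist_neg_neg _ _
      _ ≤ K * dist x y := h1.dist_le_mul x y
  -- column solutions for W
  have hWex : ∀ j : Fin d, ∃ f : ℝ → Fin d → ℝ, Continuous f ∧ f t₀ = Pi.single j 1 ∧
      ∀ t ∈ Icc t₀ T, HasDerivWithinAt f (wc t *ᵥ f t) (Icc t₀ T) t :=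
    fun j => ode_global_cont (fun t x => wc t *ᵥ x) t₀ T ht.le K (hlip wc hKb) hcont1 _
  choose Wcol hWcolc hWcol0 hWcolode using hWex
  have hVex : ∀ i : Fin d, ∃ f : ℝ → Fin d → ℝ, Continuous f ∧ f t₀ = Pi.single i 1 ∧
      ∀ t ∈ Icc t₀ T, HasDerivWithinAt f (-((wc t)ᵀ *ᵥ f t)) (Icc t₀ T) t :=
    fun i => ode_global_cont (fun t x => -((wc t)ᵀ *ᵥ x)) t₀ T ht.le K hlip2 hcont2 _
  choose Vrow hVrowc hVrow0 hVrowode using hVex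
  set W : ℝ → Matrix (Fin d) (Fin d) ℝ := fun t => Matrix.of fun i j => Wcol j t i with hW
  set V : ℝ → Matrix (Fin d) (Fin d) ℝ := fun t => Matrix.of fun i k => Vrow i t k with hV
  have hWc : Continuous W := by
    refine continuous_pi fun i => continuous_pi fun j => ?_
    exact (continuous_apply i).comp (hWcolc j)
  have hVc : Continuous V := by
    refine continuous_pi fun i => continuous_pi fun k => ?_
    exact (continuous_apply k).comp (hVrowc i)
  have hWode : ∀ i j, ∀ t ∈ Icc t₀ T,
      HasDerivWithinAt (fun τ => W τ i j) ((w t * W t) i j) (Icc t₀ T) t := by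
    intro i j t htm
    have h1 := hasDerivWithinAt_pi.mp (hWcolode j t htm) i
    have h2 : (wc t *ᵥ Wcol j t) i = (w t * W t) i j := by
      rw [hwceq t htm]
      simp [hW, Matrix.mul_apply, Matrix.mulVec, dotProduct]
    rw [h2] at h1
    exact h1
  have hVode : ∀ i k, ∀ t ∈ Icc t₀ T,
      HasDerivWithinAt (fun τ => V τ i k) ((-(V t * w t)) i k) (Icc t₀ T) t := by
    intro i k t htm
    have h1 := hasDerivWithinAt_pi.mp (hVrowode i t htm) k
    have h2 : (-((wc t)ᵀ *ᵥ Vrow i t)) k = (-(V t * w t)) i k := by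
      rw [hwceq t htm]
      simp [hV, Matrix.mul_apply, Matrix.mulVec, dotProduct, Matrix.transpose_apply,
        mul_comm]
    rw [h2] at h1
    exact h1
  have hVW : ∀ t ∈ Icc t₀ T, V t * W t = 1 := by
    have hconst : ∀ i k, ∀ t ∈ Icc t₀ T, (V t * W t) i k = (V t₀ * W t₀) i k := by
      intro i k
      refine constant_of_has_deriv_right_zero ?_ ?_
      · exact ((hVc.matrix_mul hWc).matrix_elem i k).continuousOn
      · intro τ hτ
        have hτ' : τ ∈ Icc t₀ T := Ico_subset_Icc_self hτ
        have hterm : ∀ l ∈ Finset.univ, HasDerivWithinAt (fun τ' => V τ' i l * W τ' l k)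
            ((-(V τ * w τ)) i l * W τ l k + V τ i l * ((w τ * W τ) l k)) (Icc t₀ T) τ :=
          fun l _ => (hVode i l τ hτ').mul (hWode l k τ hτ')
        have hsum := HasDerivWithinAt.fun_sum hterm
        have hzero : (∑ l, ((-(V τ * w τ)) i l * W τ l k + V τ i l * ((w τ * W τ) l k))) = 0 := by
          have h1 : (∑ l, ((-(V τ * w τ)) i l * W τ l k + V τ i l * ((w τ * W τ) l k)))
              = ((-(V τ * w τ)) * W τ + V τ * (w τ * W τ)) i k := by
            simp [Matrix.mul_apply, Matrix.add_apply, Finset.sum_add_distrib]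
          rw [h1, Matrix.neg_mul, Matrix.mul_assoc, neg_add_cancel]
          simp
        rw [hzero] at hsum
        have hfun : HasDerivWithinAt (fun τ' => (V τ' * W τ') i k) 0 (Icc t₀ T) τ := by
          have heq : (fun τ' => (V τ' * W τ') i k) = fun τ' => ∑ l, V τ' i l * W τ' l k := by
            funext τ'
            simp [Matrix.mul_apply]
          rw [heq]
          exact hsum
        refine hfun.mono_of_mem_nhdsWithin ?_
        rw [mem_nhdsWithin]
        refine ⟨Iio T, isOpen_Iio, hτ.2, fun y hy => ⟨le_trans hτ'.1 hy.2, le_of_lt hy.1⟩⟩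
    intro t htm
    have h0 : V t₀ * W t₀ = 1 := by
      ext i k
      simp [hV, hW, Matrix.mul_apply, hVrow0, hWcol0, Pi.single_apply, Matrix.one_apply,
        eq_comm]
    ext i k
    rw [hconst i k t htm, h0]
  have hWV : ∀ t ∈ Icc t₀ T, W t * V t = 1 := fun t htm =>
    mul_eq_one_comm.mpr (hVW t htm)
  exact ⟨W, V, hWc, hVc, hWode, hVode, hVW, hWV⟩

lemma mem_reach {d : ℕ} (t₀ T : ℝ) (ht : t₀ < T) (w : ℝ → Matrix (Fin d) (Fin d) ℝ)
    (hw : ContinuousOn w (Set.Icc t₀ T)) (y : (Fin d → ℝ) → Fin d → ℝ)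
    (hy : MemLp y 2 (volume : Measure (Fin d → ℝ))) :
    ∃ b : ℝ → (Fin d → ℝ) → Fin d → ℝ,
      (∀ t ∈ Set.Icc t₀ T, MemLp (b t) 2 (volume : Measure (Fin d → ℝ))) ∧
      Measurable (Function.uncurry b) ∧
      (∀ s ∈ Set.Icc t₀ T,
        Filter.Tendsto (fun t => ∫ x, ‖b t x - b s x‖ ^ 2)
          (nhdsWithin s (Set.Icc t₀ T)) (nhds 0)) ∧
      ∃ Φ : ℝ → (Fin d → ℝ) → Fin d → ℝ,
        (∀ x, ∀ t ∈ Set.Icc t₀ T,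
          HasDerivWithinAt (fun s => Φ s x) (w t *ᵥ Φ t x + b t x) (Set.Icc t₀ T) t) ∧
        (∀ x, Φ t₀ x = 0) ∧ Φ T =ᵐ[(volume : Measure (Fin d → ℝ))] y := by
  classical
  have hsm := hy.1.aemeasurable
  set g := hsm.mk y with hgdef
  have hgm : Measurable g := hsm.measurable_mk
  have hgy : y =ᵐ[(volume : Measure (Fin d → ℝ))] g := hsm.ae_eq_mk
  have hg : MemLp g 2 (volume : Measure (Fin d → ℝ)) := hy.ae_eq hgy
  set wc := fun t => w (projIcc t₀ T ht.le t) with hwc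
  have hwcc : Continuous wc :=
    (continuousOn_iff_continuous_restrict.mp hw).comp continuous_projIcc
  have hwceq : ∀ t ∈ Icc t₀ T, wc t = w t := fun t htm => by
    simp only [hwc, projIcc_of_mem ht.le htm]
  set c : ℝ := (T - t₀)⁻¹ with hc
  set α : ℝ → ℝ := fun t => (t - t₀) * c with hα
  have hαc : Continuous α := (continuous_id.sub continuous_const).mul continuous_const
  set B : ℝ → Matrix (Fin d) (Fin d) ℝ := fun t => c • (1 : Matrix (Fin d) (Fin d) ℝ)
    - α t • wc t with hB
  have hBc : Continuous B := continuous_const.sub (hαc.smul hwcc)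
  refine ⟨fun t x => B t *ᵥ g x, fun t _ => memLp_mulVec hgm hg (B t), ?_, ?_, ?_⟩
  · show Measurable fun p : ℝ × (Fin d → ℝ) => B p.1 *ᵥ g p.2
    refine measurable_pi_lambda _ fun i => ?_
    show Measurable fun p : ℝ × (Fin d → ℝ) => ∑ j, B p.1 i j * g p.2 j
    refine Finset.measurable_sum _ fun j _ => Measurable.mul ?_ ?_
    · exact ((hBc.matrix_elem i j).measurable).comp measurable_fst
    · exact ((measurable_pi_apply j).comp hgm).comp measurable_snd
  · intro s hs
    have hI0 : Integrable (fun x => ‖g x‖ ^ 2) (volume : Measure (Fin d → ℝ)) :=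
      (memLp_two_iff_integrable_sq_norm hg.1).mp hg
    have hbnd : ∀ t : ℝ, ∫ x, ‖B t *ᵥ g x - B s *ᵥ g x‖ ^ 2 ≤
        S (B t - B s) ^ 2 * ∫ x, ‖g x‖ ^ 2 := by
      intro t
      have h1 : ∀ x : Fin d → ℝ, B t *ᵥ g x - B s *ᵥ g x = (B t - B s) *ᵥ g x :=
        fun x => (Matrix.sub_mulVec _ _ _).symm
      calc ∫ x, ‖B t *ᵥ g x - B s *ᵥ g x‖ ^ 2 = ∫ x, ‖(B t - B s) *ᵥ g x‖ ^ 2 :=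
            integral_congr_ae (Filter.Eventually.of_forall fun x => by simp only [h1 x])
        _ ≤ _ := int_sq_mulVec hgm hg (B t - B s)
    have hup : Filter.Tendsto (fun t => S (B t - B s) ^ 2 * ∫ x, ‖g x‖ ^ 2)
        (nhdsWithin s (Set.Icc t₀ T)) (nhds 0) := by
      have hcont : Continuous fun t => S (B t - B s) ^ 2 * ∫ x, ‖g x‖ ^ 2 :=
        ((S_continuous.comp (hBc.sub continuous_const)).pow 2).mul continuous_const
      have h0 : S (B s - B s) ^ 2 * ∫ x, ‖g x‖ ^ 2 = 0 := by
        simp [S, sub_self]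
      have h2 := hcont.tendsto s
      rw [h0] at h2
      exact h2.mono_left nhdsWithin_le_nhds
    refine tendsto_of_tendsto_of_tendsto_of_le_of_le (g := fun _ => (0:ℝ))
      tendsto_const_nhds hup ?_ ?_
    · intro t
      exact integral_nonneg fun x => pow_nonneg (norm_nonneg _) 2
    · intro t
      exact hbnd t
  · refine ⟨fun t x => α t • g x, ?_, ?_, ?_⟩
    · intro x t htm
      have hd : HasDerivWithinAt (fun u => α u • g x) (c • g x) (Icc t₀ T) t := by
        have h1 : HasDerivAt α c t := by
          simpa using ((hasDerivAt_id t).sub_const t₀).mul_const c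
        exact (h1.smul_const (g x)).hasDerivWithinAt
      have hval : w t *ᵥ (α t • g x) + B t *ᵥ g x = c • g x := by
        rw [hB]
        simp only [Matrix.sub_mulVec, Matrix.smul_mulVec, Matrix.one_mulVec,
          Matrix.mulVec_smul, hwceq t htm]
        abel
      rw [hval]
      exact hd
    · intro x
      simp [hα]
    · have hT : (fun x => α T • g x) = g := by
        funext x
        have h1 : α T = 1 := mul_inv_cancel₀ (sub_ne_zero.mpr ht.ne')
        rw [h1, one_smul]
      show (fun x => α T • g x) =ᵐ[(volume : Measure (Fin d → ℝ))] y
      rw [hT]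
      exact hgy.symm

lemma mem_hum {d : ℕ} (t₀ T : ℝ) (ht : t₀ < T) (w : ℝ → Matrix (Fin d) (Fin d) ℝ)
    (hw : ContinuousOn w (Set.Icc t₀ T)) (y : (Fin d → ℝ) → Fin d → ℝ)
    (hy : MemLp y 2 (volume : Measure (Fin d → ℝ))) :
    ∃ ΛT : (Fin d → ℝ) → Fin d → ℝ, MemLp ΛT 2 (volume : Measure (Fin d → ℝ)) ∧
      ∃ Λ Φ : ℝ → (Fin d → ℝ) → Fin d → ℝ,
        (∀ x, ∀ t ∈ Set.Icc t₀ T,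
          HasDerivWithinAt (fun s => Λ s x) (-((w t)ᵀ *ᵥ Λ t x)) (Set.Icc t₀ T) t) ∧
        (∀ x, Λ T x = ΛT x) ∧
        (∀ x, ∀ t ∈ Set.Icc t₀ T,
          HasDerivWithinAt (fun s => Φ s x) (w t *ᵥ Φ t x + Λ t x) (Set.Icc t₀ T) t) ∧
        (∀ x, Φ t₀ x = 0) ∧ Φ T =ᵐ[(volume : Measure (Fin d → ℝ))] y := by
  classical
  have hsm := hy.1.aemeasurable
  set g := hsm.mk y with hgdef
  have hgm : Measurable g := hsm.measurable_mk
  have hgy : y =ᵐ[(volume : Measure (Fin d → ℝ))] g := hsm.ae_eq_mk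
  have hg : MemLp g 2 (volume : Measure (Fin d → ℝ)) := hy.ae_eq hgy
  obtain ⟨W, V, hWc, hVc, hWode, hVode, hVW, hWV⟩ := exists_flow t₀ T ht w hw
  set U : ℝ → Matrix (Fin d) (Fin d) ℝ := fun t => (W T * V t)ᵀ with hU
  have hUc : Continuous U := (continuous_const.matrix_mul hVc).matrix_transpose
  set M : ℝ → Matrix (Fin d) (Fin d) ℝ := fun s => W T * V s with hM
  have hMc : Continuous M := continuous_const.matrix_mul hVc
  have hTmem : T ∈ Icc t₀ T := right_mem_Icc.mpr ht.le
  have hMinv : ∀ s ∈ Icc t₀ T, M s * (W s * V T) = 1 := by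
    intro s hsmem
    have h1 : M s * (W s * V T) = W T * (V s * W s * V T) := by
      rw [hM]
      rw [Matrix.mul_assoc, ← Matrix.mul_assoc (V s)]
    rw [h1, hVW s hsmem, Matrix.one_mul]
    exact hWV T hTmem
  set G : Matrix (Fin d) (Fin d) ℝ :=
    Matrix.of (fun i j => ∫ s in t₀..T, (M s * (M s)ᵀ) i j) with hG
  have hMMc : Continuous fun s => M s * (M s)ᵀ := hMc.matrix_mul hMc.matrix_transpose
  have hMMint : ∀ u : Fin d → ℝ,
      IntervalIntegrable (fun s => (M s * (M s)ᵀ) *ᵥ u) MeasureTheory.volume t₀ T :=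
    fun u => (hMMc.matrix_mulVec continuous_const).intervalIntegrable _ _
  have hkey : ∀ u : Fin d → ℝ, (∫ s in t₀..T, (M s * (M s)ᵀ) *ᵥ u) = G *ᵥ u := by
    intro u
    funext i
    rw [intervalIntegral_proj (hMMint u) i]
    calc ∫ s in t₀..T, ((M s * (M s)ᵀ) *ᵥ u) i
        = ∫ s in t₀..T, ∑ j, (M s * (M s)ᵀ) i j * u j := rfl
      _ = ∑ j, ∫ s in t₀..T, (M s * (M s)ᵀ) i j * u j :=
          intervalIntegral.integral_finset_sum
            (fun j _ => ((hMMc.matrix_elem i j).intervalIntegrable _ _).mul_const _)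
      _ = ∑ j, (∫ s in t₀..T, (M s * (M s)ᵀ) i j) * u j := by
          refine Finset.sum_congr rfl fun j _ => ?_
          rw [intervalIntegral.integral_mul_const]
      _ = (G *ᵥ u) i := rfl
  have hpos : ∀ v : Fin d → ℝ, v ≠ 0 → 0 < v ⬝ᵥ (G *ᵥ v) := by
    intro v hv
    have h1 : v ⬝ᵥ (G *ᵥ v) = ∫ s in t₀..T, v ⬝ᵥ ((M s * (M s)ᵀ) *ᵥ v) := by
      rw [← hkey v, dotProduct_intervalIntegral v (hMMint v)]
    have h2 : ∀ s, v ⬝ᵥ ((M s * (M s)ᵀ) *ᵥ v) = ((M s)ᵀ *ᵥ v) ⬝ᵥ ((M s)ᵀ *ᵥ v) := by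
      intro s
      rw [← Matrix.mulVec_mulVec, dotProduct_mulVec]
      congr 1
      rw [← Matrix.transpose_transpose (M s), Matrix.vecMul_transpose,
        Matrix.transpose_transpose]
    rw [h1]
    have hint : IntervalIntegrable (fun s => v ⬝ᵥ ((M s * (M s)ᵀ) *ᵥ v))
        MeasureTheory.volume t₀ T := by
      refine Continuous.intervalIntegrable ?_ _ _
      have h3 : (fun s => v ⬝ᵥ ((M s * (M s)ᵀ) *ᵥ v))
          = fun s => ((M s)ᵀ *ᵥ v) ⬝ᵥ ((M s)ᵀ *ᵥ v) := funext h2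
      rw [h3]
      exact (hMc.matrix_transpose.matrix_mulVec continuous_const).dotProduct
        (hMc.matrix_transpose.matrix_mulVec continuous_const)
    refine intervalIntegral.intervalIntegral_pos_of_pos_on hint ?_ ht
    intro s hso
    have hsmem : s ∈ Icc t₀ T := Ioo_subset_Icc_self hso
    rw [h2 s]
    have hMv : (M s)ᵀ *ᵥ v ≠ 0 := by
      intro hz
      apply hv
      have hNT2 : (W s * V T)ᵀ * (M s)ᵀ = 1 := by
        rw [← Matrix.transpose_mul, hMinv s hsmem, Matrix.transpose_one]
      calc v = ((W s * V T)ᵀ * (M s)ᵀ) *ᵥ v := by rw [hNT2, Matrix.one_mulVec]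
        _ = (W s * V T)ᵀ *ᵥ ((M s)ᵀ *ᵥ v) := (Matrix.mulVec_mulVec _ _ _).symm
        _ = 0 := by rw [hz, Matrix.mulVec_zero]
    have hnn : 0 ≤ ((M s)ᵀ *ᵥ v) ⬝ᵥ ((M s)ᵀ *ᵥ v) :=
      Finset.sum_nonneg fun i _ => mul_self_nonneg _
    rcases hnn.lt_or_eq with h | h
    · exact h
    · exact absurd (dotProduct_self_eq_zero.mp h.symm) hMv
  have hinj : Function.Injective G.mulVec := by
    intro u₁ u₂ h12
    by_contra hne
    have hz : G *ᵥ (u₁ - u₂) = 0 := by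
      rw [Matrix.mulVec_sub]
      show G.mulVec u₁ - G.mulVec u₂ = 0
      rw [h12, sub_self]
    have hp := hpos (u₁ - u₂) (sub_ne_zero.mpr hne)
    rw [hz, dotProduct_zero] at hp
    exact lt_irrefl 0 hp
  have hGunit : IsUnit G := Matrix.mulVec_injective_iff_isUnit.mp hinj
  have hGG : G * G⁻¹ = 1 := Matrix.mul_nonsing_inv G ((Matrix.isUnit_iff_isUnit_det G).mp hGunit)
  set ξ : (Fin d → ℝ) → Fin d → ℝ := fun x => G⁻¹ *ᵥ g x with hξ
  have hUd : ∀ t ∈ Icc t₀ T, ∀ i j, HasDerivWithinAt (fun τ => U τ i j)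
      (((W T * (-(V t * w t)))ᵀ) i j) (Icc t₀ T) t := by
    intro t htm i j
    have h1 : ∀ l ∈ Finset.univ, HasDerivWithinAt (fun τ => W T j l * V τ l i)
        (W T j l * ((-(V t * w t)) l i)) (Icc t₀ T) t := fun l _ =>
      (hVode l i t htm).const_mul _
    have hsum := HasDerivWithinAt.fun_sum h1
    have heq : (fun τ => U τ i j) = fun τ => ∑ l, W T j l * V τ l i := by
      funext τ
      simp [hU, Matrix.transpose_apply, Matrix.mul_apply, mul_comm]
    have hval : ((W T * (-(V t * w t)))ᵀ) i j = ∑ l, W T j l * ((-(V t * w t)) l i) := by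
      simp [Matrix.transpose_apply, Matrix.mul_apply]
    rw [heq, hval]
    exact hsum
  refine ⟨ξ, memLp_mulVec hgm hg G⁻¹, fun t x => U t *ᵥ ξ x,
    fun t x => W t *ᵥ (∫ s in t₀..t, (V s * U s) *ᵥ ξ x), ?_, ?_, ?_, ?_, ?_⟩
  · intro x t htm
    have hD := hasDerivWithinAt_mulVec' (f := U) (u := fun _ => ξ x)
      (f' := (W T * (-(V t * w t)))ᵀ) (fun i j => hUd t htm i j)
      (hasDerivWithinAt_const t (Icc t₀ T) (ξ x))
    have hD' : HasDerivWithinAt (fun s => U s *ᵥ ξ x)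
        ((W T * (-(V t * w t)))ᵀ *ᵥ ξ x + U t *ᵥ 0) (Icc t₀ T) t := hD
    have hmat : (W T * (-(V t * w t)))ᵀ = -((w t)ᵀ * U t) := by
      simp only [hU, Matrix.mul_neg, Matrix.transpose_neg, Matrix.transpose_mul,
        Matrix.mul_assoc]
    have hval : (W T * (-(V t * w t)))ᵀ *ᵥ ξ x + U t *ᵥ 0 = -((w t)ᵀ *ᵥ (U t *ᵥ ξ x))
        := by
      rw [Matrix.mulVec_zero, add_zero, hmat, Matrix.neg_mulVec, ← Matrix.mulVec_mulVec]
    rwa [hval] at hD'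
  · intro x
    show (W T * V T)ᵀ *ᵥ ξ x = ξ x
    rw [hWV T hTmem, Matrix.transpose_one, Matrix.one_mulVec]
  · intro x t htm
    have hFc : Continuous fun s => (V s * U s) *ᵥ ξ x :=
      (hVc.matrix_mul hUc).matrix_mulVec continuous_const
    have hq : HasDerivWithinAt (fun τ => ∫ s in t₀..τ, (V s * U s) *ᵥ ξ x)
        ((V t * U t) *ᵥ ξ x) (Icc t₀ T) t :=
      (intervalIntegral.integral_hasDerivAt_right (hFc.intervalIntegrable _ _)
        hFc.aestronglyMeasurable.stronglyMeasurableAtFilter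
        hFc.continuousAt).hasDerivWithinAt
    have hD := hasDerivWithinAt_mulVec' (f := W) (f' := w t * W t)
      (fun i j => hWode i j t htm) hq
    have hD' : HasDerivWithinAt (fun s => W s *ᵥ (∫ u in t₀..s, (V u * U u) *ᵥ ξ x))
        ((w t * W t) *ᵥ (∫ s in t₀..t, (V s * U s) *ᵥ ξ x) + W t *ᵥ ((V t * U t) *ᵥ ξ x))
        (Icc t₀ T) t := hD
    have hval : (w t * W t) *ᵥ (∫ s in t₀..t, (V s * U s) *ᵥ ξ x)
        + W t *ᵥ ((V t * U t) *ᵥ ξ x)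
        = w t *ᵥ (W t *ᵥ (∫ s in t₀..t, (V s * U s) *ᵥ ξ x)) + U t *ᵥ ξ x := by
      congr 1
      · rw [Matrix.mulVec_mulVec]
      · rw [Matrix.mulVec_mulVec, ← Matrix.mul_assoc, hWV t htm, Matrix.one_mul]
    rwa [hval] at hD'
  · intro x
    show W t₀ *ᵥ (∫ s in t₀..t₀, (V s * U s) *ᵥ ξ x) = 0
    rw [intervalIntegral.integral_same, Matrix.mulVec_zero]
  · have hΦT : ∀ x, W T *ᵥ (∫ s in t₀..T, (V s * U s) *ᵥ ξ x) = g x := by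
      intro x
      have hFint : IntervalIntegrable (fun s => (V s * U s) *ᵥ ξ x) MeasureTheory.volume t₀ T :=
        ((hVc.matrix_mul hUc).matrix_mulVec continuous_const).intervalIntegrable _ _
      rw [mulVec_intervalIntegral (W T) hFint]
      have hcongr : ∀ s, W T *ᵥ ((V s * U s) *ᵥ ξ x) = (M s * (M s)ᵀ) *ᵥ ξ x := by
        intro s
        rw [Matrix.mulVec_mulVec, ← Matrix.mul_assoc]
      rw [intervalIntegral.integral_congr (fun s _ => hcongr s)]
      rw [hkey (ξ x), hξ]
      rw [Matrix.mulVec_mulVec, hGG, Matrix.one_mulVec]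
    have hfun : (fun x => W T *ᵥ (∫ s in t₀..T, (V s * U s) *ᵥ ξ x)) = g := funext hΦT
    show (fun x => W T *ᵥ (∫ s in t₀..T, (V s * U s) *ᵥ ξ x))
      =ᵐ[(volume : Measure (Fin d → ℝ))] y
    rw [hfun]
    exact hgy.symm

end HUMaux

open Matrix MeasureTheory

/-- **Parameterized HUM for the characteristic flow** (Theorem 2). The reachable set
`𝓡_Φ` of terminal flow maps of `∂ₜΦ(t,x) = w(t)Φ(t,x) + b(t,x)`, `Φ(t₀,x) = 0`, over
admissible `L²` controls `b`, coincides with the image of the parameterized HUM map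
`Γ_Φ : Λᵀ ↦ Φ(T,·)`, where `Λ` solves the adjoint equation `∂ₜΛ = -w(t)ᵀΛ`,
`Λ(T,·) = Λᵀ`, and `Φ` solves the flow equation with feedback control `b = Λ`. -/
theorem flow_reachable_eq_image {d : ℕ} (t₀ T : ℝ) (ht : t₀ < T)
    (w : ℝ → Matrix (Fin d) (Fin d) ℝ) (hw : ContinuousOn w (Set.Icc t₀ T)) :
    {y : (Fin d → ℝ) → Fin d → ℝ | MemLp y 2 (volume : Measure (Fin d → ℝ)) ∧
      ∃ b : ℝ → (Fin d → ℝ) → Fin d → ℝ,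
        (∀ t ∈ Set.Icc t₀ T, MemLp (b t) 2 (volume : Measure (Fin d → ℝ))) ∧
        Measurable (Function.uncurry b) ∧
        (∀ s ∈ Set.Icc t₀ T,
          Filter.Tendsto (fun t => ∫ x, ‖b t x - b s x‖ ^ 2)
            (nhdsWithin s (Set.Icc t₀ T)) (nhds 0)) ∧
        ∃ Φ : ℝ → (Fin d → ℝ) → Fin d → ℝ,
          (∀ x, ∀ t ∈ Set.Icc t₀ T,
            HasDerivWithinAt (fun s => Φ s x) (w t *ᵥ Φ t x + b t x) (Set.Icc t₀ T) t) ∧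
          (∀ x, Φ t₀ x = 0) ∧ Φ T =ᵐ[(volume : Measure (Fin d → ℝ))] y} =
    {y : (Fin d → ℝ) → Fin d → ℝ | MemLp y 2 (volume : Measure (Fin d → ℝ)) ∧
      ∃ ΛT : (Fin d → ℝ) → Fin d → ℝ, MemLp ΛT 2 (volume : Measure (Fin d → ℝ)) ∧
        ∃ Λ Φ : ℝ → (Fin d → ℝ) → Fin d → ℝ,
          (∀ x, ∀ t ∈ Set.Icc t₀ T,
            HasDerivWithinAt (fun s => Λ s x) (-((w t)ᵀ *ᵥ Λ t x)) (Set.Icc t₀ T) t) ∧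
          (∀ x, Λ T x = ΛT x) ∧
          (∀ x, ∀ t ∈ Set.Icc t₀ T,
            HasDerivWithinAt (fun s => Φ s x) (w t *ᵥ Φ t x + Λ t x) (Set.Icc t₀ T) t) ∧
          (∀ x, Φ t₀ x = 0) ∧ Φ T =ᵐ[(volume : Measure (Fin d → ℝ))] y} := by
  ext y
  simp only [Set.mem_setOf_eq]
  constructor
  · rintro ⟨h1, -⟩
    exact ⟨h1, HUMaux.mem_hum t₀ T ht w hw y h1⟩
  · rintro ⟨h1, -⟩
    exact ⟨h1, HUMaux.mem_reach t₀ T ht w hw y h1⟩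
end

section
/- Let $0 = t_0 < T$, let $w : [0,T] \to \mathbb{R}$ be continuous, and set $c_1 = \exp\big(\int_{0}^{T} w(s)\,ds\big)$ and $c_2 = \int_{0}^{T} \exp\big(-\int_{0}^{s} w(r)\,dr\big)\,ds$. Let $\mu_0$ and $\nu$ be Borel probability measures on $\mathbb{R}$ with finite first moment, and let $S : \mathbb{R} \to \mathbb{R}$ be a Borel measurable transport map with $S_\# \mu_0 = \nu$. Define the state- and target-dependent static bias $b(x) = \dfrac{S(x) - x\, c_1}{c_1 c_2}$, and for each $x \in \mathbb{R}$ let $\Phi(\cdot, x)$ solve $\partial_t \Phi(t,x) = w(t)\Phi(t,x) + b(x)$, $\Phi(0,x) = x$. Then the terminal flow map satisfies $\Phi(T, x) = S(x)$ for all $x \in \mathbb{R}$, and consequently $(\Phi(T,\cdot))_\# \mu_0 = \nu$, i.e., the mean-field neural network equation with identity activation is controllable from $\mu_0$ to $\nu$ in the sense of push-forward of measures. -/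
open MeasureTheory

/-- `c₁(t) = exp(∫_{t₀}^t w(s) ds)`. -/
noncomputable def c1 (t₀ : ℝ) (w : ℝ → ℝ) (t : ℝ) : ℝ :=
  Real.exp (∫ s in t₀..t, w s)

/-- `c₂(t) = ∫_{t₀}^t exp(-∫_{t₀}^s w(r) dr) ds`. -/
noncomputable def c2 (t₀ : ℝ) (w : ℝ → ℝ) (t : ℝ) : ℝ :=
  ∫ s in t₀..t, Real.exp (-∫ r in t₀..s, w r)

/-- **Mean-field controllability via a transport map and static bias.** If `S` pushes
`μ₀` forward to `ν`, then the state-dependent static bias `b(x) = (S(x) - x c₁)/(c₁ c₂)`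
makes the characteristic flow `∂ₜΦ(t,x) = w(t)Φ(t,x) + b(x)`, `Φ(0,x) = x`, satisfy
`Φ(T,x) = S(x)` for all `x`, hence `(Φ(T,·))_♯ μ₀ = ν`: the mean-field neural network
equation with identity activation is controllable from `μ₀` to `ν`. -/
theorem mean_field_controllability (T : ℝ) (hT : (0 : ℝ) < T)
    (w : ℝ → ℝ) (hw : ContinuousOn w (Set.Icc 0 T))
    (μ0 ν : Measure ℝ) [IsProbabilityMeasure μ0] [IsProbabilityMeasure ν]
    (hμ0 : Integrable (fun x => |x|) μ0) (hν : Integrable (fun x => |x|) ν)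
    (S : ℝ → ℝ) (hS : Measurable S) (hpush : μ0.map S = ν)
    (Φ : ℝ → ℝ → ℝ)
    (hΦ0 : ∀ x, Φ 0 x = x)
    (hΦ : ∀ x, ∀ t ∈ Set.Icc (0 : ℝ) T,
      HasDerivWithinAt (fun s => Φ s x)
        (w t * Φ t x + (S x - x * c1 0 w T) / (c1 0 w T * c2 0 w T))
        (Set.Icc (0 : ℝ) T) t) :
    (∀ x, Φ T x = S x) ∧ μ0.map (Φ T) = ν := by
  have hTIcc : T ∈ Set.Icc (0:ℝ) T := Set.right_mem_Icc.2 hT.le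
  have huIcc : Set.uIcc (0:ℝ) T = Set.Icc 0 T := Set.uIcc_of_le hT.le
  -- I t = ∫ 0..t w
  set I : ℝ → ℝ := fun t => ∫ s in (0:ℝ)..t, w s with hI
  have hwint : ∀ t ∈ Set.Icc (0:ℝ) T, IntervalIntegrable w volume 0 t := by
    intro t ht
    apply ContinuousOn.intervalIntegrable
    apply hw.mono
    rw [Set.uIcc_of_le ht.1]
    exact Set.Icc_subset_Icc le_rfl ht.2
  have hIcont : ContinuousOn I (Set.Icc 0 T) := by
    rw [← huIcc]
    exact intervalIntegral.continuousOn_primitive_interval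
      (huIcc ▸ hw.integrableOn_Icc)
  -- g = integrand of c2
  set g : ℝ → ℝ := fun s => Real.exp (-I s) with hg
  have hgcont : ContinuousOn g (Set.Icc 0 T) := (hIcont.neg).rexp
  have hgint : ∀ t ∈ Set.Icc (0:ℝ) T, IntervalIntegrable g volume 0 t := by
    intro t ht
    apply ContinuousOn.intervalIntegrable
    apply hgcont.mono
    rw [Set.uIcc_of_le ht.1]
    exact Set.Icc_subset_Icc le_rfl ht.2
  have hc2cont : ContinuousOn (c2 0 w) (Set.Icc 0 T) := by
    rw [← huIcc]
    exact intervalIntegral.continuousOn_primitive_interval (huIcc ▸ hgcont.integrableOn_Icc)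
  -- positivity
  have hc1pos : 0 < c1 0 w T := Real.exp_pos _
  have hc2pos : 0 < c2 0 w T := by
    apply intervalIntegral.intervalIntegral_pos_of_pos_on (hgint T hTIcc)
      (fun s _ => Real.exp_pos _) hT
  have hc1c2 : c1 0 w T * c2 0 w T ≠ 0 := by positivity
  -- mem lemma
  have hmem : ∀ y ∈ Set.Ico (0:ℝ) T, Set.Icc (0:ℝ) T ∈ nhdsWithin y (Set.Ici y) := by
    intro y hy
    filter_upwards [Filter.inter_mem self_mem_nhdsWithin
      (nhdsWithin_le_nhds (Iio_mem_nhds hy.2))] with z hz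
    exact ⟨le_trans hy.1 hz.1, hz.2.le⟩
  -- derivative of I within Ici y
  have hmem' : ∀ y ∈ Set.Ico (0:ℝ) T, Set.Icc (0:ℝ) T ∈ nhdsWithin y (Set.Ioi y) :=
    fun y hy => nhdsWithin_mono y Set.Ioi_subset_Ici_self (hmem y hy)
  have hIderiv : ∀ y ∈ Set.Ico (0:ℝ) T, HasDerivWithinAt I (w y) (Set.Ici y) y := by
    intro y hy
    have hyIcc : y ∈ Set.Icc (0:ℝ) T := ⟨hy.1, hy.2.le⟩
    exact intervalIntegral.integral_hasDerivWithinAt_right (hwint y hyIcc)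
      ⟨Set.Icc 0 T, hmem' y hy, hw.aestronglyMeasurable measurableSet_Icc⟩
      ((hw y hyIcc).mono_of_mem_nhdsWithin (hmem' y hy))
  have hgderiv : ∀ y ∈ Set.Ico (0:ℝ) T, HasDerivWithinAt (c2 0 w) (g y) (Set.Ici y) y := by
    intro y hy
    have hyIcc : y ∈ Set.Icc (0:ℝ) T := ⟨hy.1, hy.2.le⟩
    exact intervalIntegral.integral_hasDerivWithinAt_right (hgint y hyIcc)
      ⟨Set.Icc 0 T, hmem' y hy, hgcont.aestronglyMeasurable measurableSet_Icc⟩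
      ((hgcont y hyIcc).mono_of_mem_nhdsWithin (hmem' y hy))
  have key : ∀ x, Φ T x = S x := by
    intro x
    set b : ℝ := (S x - x * c1 0 w T) / (c1 0 w T * c2 0 w T) with hb
    set F : ℝ → ℝ := fun t => Φ t x * Real.exp (-I t) - b * c2 0 w t with hF
    have hΦcont : ContinuousOn (fun s => Φ s x) (Set.Icc 0 T) :=
      fun t ht => (hΦ x t ht).continuousWithinAt
    have hFcont : ContinuousOn F (Set.Icc 0 T) :=
      ((hΦcont.mul (hIcont.neg.rexp)).sub (continuousOn_const.mul hc2cont))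
    have hFderiv : ∀ y ∈ Set.Ico (0:ℝ) T, HasDerivWithinAt F 0 (Set.Ici y) y := by
      intro y hy
      have hyIcc : y ∈ Set.Icc (0:ℝ) T := ⟨hy.1, hy.2.le⟩
      have h1 : HasDerivWithinAt (fun s => Φ s x)
          (w y * Φ y x + b) (Set.Ici y) y :=
        (hΦ x y hyIcc).mono_of_mem_nhdsWithin (hmem y hy)
      have h2 : HasDerivWithinAt (fun s => Real.exp (-I s))
          (Real.exp (-I y) * (-w y)) (Set.Ici y) y :=
        ((hIderiv y hy).neg).exp
      have h3 : HasDerivWithinAt F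
          ((w y * Φ y x + b) * Real.exp (-I y) + Φ y x * (Real.exp (-I y) * (-w y))
            - b * g y) (Set.Ici y) y :=
        (h1.mul h2).sub ((hgderiv y hy).const_mul b)
      convert h3 using 1
      simp only [hg]
      ring
    have hconst := constant_of_has_deriv_right_zero hFcont hFderiv T hTIcc
    have hI0 : I 0 = 0 := intervalIntegral.integral_same
    have hc20 : c2 0 w 0 = 0 := intervalIntegral.integral_same
    have hF0 : F 0 = x := by
      simp [hF, hΦ0 x, hI0, hc20]
    rw [hF0] at hconst
    have hITc1 : Real.exp (I T) = c1 0 w T := rfl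
    have : Φ T x = Real.exp (I T) * (x + b * c2 0 w T) := by
      have h := hconst
      have hexp : Real.exp (-I T) ≠ 0 := (Real.exp_pos _).ne'
      have h' : Φ T x * Real.exp (-I T) = x + b * c2 0 w T := by
        simp only [hF] at h; linarith
      have he : Real.exp (I T) * Real.exp (-I T) = 1 := by
        rw [← Real.exp_add]; simp
      calc Φ T x = Φ T x * Real.exp (-I T) * Real.exp (I T) := by
            rw [mul_assoc, mul_comm (Real.exp (-I T)), he, mul_one]
        _ = Real.exp (I T) * (x + b * c2 0 w T) := by rw [h', mul_comm]
    rw [this, hITc1, hb]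
    field_simp
    ring
  refine ⟨key, ?_⟩
  have : Φ T = S := funext key
  rw [this, hpush]
end
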